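/- arXiv:2209.04620 — 3 statements merged into one kernel-verified Lean document; each statement's English description precedes it below -/
import Mathlib

section
/- The function 𝒯₃(t,p,i,s) := ∫_t^T [(1−F(v−t+s))/(1−F(s))] w(v,p,i,v−t+s) dv possesses, at every point of D° = (0,T)×(0,∞)×𝒳×(0,∞), the directional derivative D_{t,s}𝒯₃(t,p,i,s) := lim_{ε→0} (𝒯₃(t+ε,p,i,s+ε) − 𝒯₃(t,p,i,s))/ε, which is continuous on D° and equals ∫_t^T [f(s)(1−F(v−t+s))/(1−F(s))²] w(v,p,i,v−t+s) dv − w(t,p,i,s). -/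
open MeasureTheory Filter Set Finset intervalIntegral

noncomputable section

/-- The state space `𝒳 = {1,2,3,4}`. -/
def stateS : Finset ℕ := {1, 2, 3, 4}

/-- The set `{j ∈ 𝒳 | j ≢ i}` : `j ≢ i` iff exactly one of `i, j` lies in `{1,2}`. -/
def conjS (i : ℕ) : Finset ℕ := if i ∈ ({1, 2} : Finset ℕ) then {3, 4} else {1, 2}

/-- `α(j) = (−1)^j`. -/
def alphaR (j : ℕ) : ℝ := (-1 : ℝ) ^ j

/-- `h = h₊ + h₋`. -/
def hsum (hp hm : ℝ → ℝ) : ℝ → ℝ := fun y => hp y + hm y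

/-- `h_{ij} = h₊` if `i + j` is even, `h₋` if `i + j` is odd. -/
def hijf (hp hm : ℝ → ℝ) (i j : ℕ) : ℝ → ℝ := if Even (i + j) then hp else hm

/-- `p_{ij}(y) = h_{ij}(y)/h(y)`. -/
def pijf (hp hm : ℝ → ℝ) (i j : ℕ) (y : ℝ) : ℝ := hijf hp hm i j y / hsum hp hm y

/-- `F(y) = 1 − exp(−∫₀^y h(v) dv)`. -/
def Ff (hp hm : ℝ → ℝ) (y : ℝ) : ℝ := 1 - Real.exp (-∫ v in (0:ℝ)..y, hsum hp hm v)

/-- `f(y) = h(y)·exp(−∫₀^y h(v) dv)`. -/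
def ff (hp hm : ℝ → ℝ) (y : ℝ) : ℝ := hsum hp hm y * Real.exp (-∫ v in (0:ℝ)..y, hsum hp hm v)

/-- Assumptions (A1)–(A4) on `h₊, h₋ : [0,∞) → [0,∞)`. -/
def hAssumptions (hp hm : ℝ → ℝ) : Prop :=
  (∀ y ∈ Set.Ici (0:ℝ), 0 ≤ hp y ∧ 0 ≤ hm y) ∧
  ContDiffOn ℝ 1 hp (Set.Ici 0) ∧ ContDiffOn ℝ 1 hm (Set.Ici 0) ∧
  (∃ c1 : ℝ, ∀ y ∈ Set.Ici (0:ℝ), hp y ≤ c1 ∧ hm y ≤ c1) ∧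
  Tendsto (fun y => ∫ v in (0:ℝ)..y, hp v) atTop atTop ∧
  Tendsto (fun y => ∫ v in (0:ℝ)..y, hm v) atTop atTop ∧
  (∀ y ∈ Set.Ici (0:ℝ), 0 < hsum hp hm y)

/-- Membership in the space `V` : continuity on `D = [0,T]×[0,∞)×𝒳×[0,∞)` together with
`sup_D |φ(t,p,i,s)|/(1+p) < ∞`. -/
def memV (T : ℝ) (φ : ℝ → ℝ → ℕ → ℝ → ℝ) : Prop :=
  (∀ i ∈ stateS, ContinuousOn (fun x : ℝ × ℝ × ℝ => φ x.1 x.2.1 i x.2.2)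
      (Set.Icc 0 T ×ˢ Set.Ici 0 ×ˢ Set.Ici 0)) ∧
  ∃ C : ℝ, ∀ t p s : ℝ, t ∈ Set.Icc (0:ℝ) T → p ∈ Set.Ici (0:ℝ) → s ∈ Set.Ici (0:ℝ) →
    ∀ i ∈ stateS, |φ t p i s| / (1 + p) ≤ C

/-- The norm `‖φ‖_V = sup_D |φ(t,p,i,s)|/(1+p)`. -/
def Vnorm (T : ℝ) (φ : ℝ → ℝ → ℕ → ℝ → ℝ) : ℝ :=
  sSup {r : ℝ | ∃ t p s : ℝ, ∃ i ∈ stateS, t ∈ Set.Icc (0:ℝ) T ∧ p ∈ Set.Ici (0:ℝ) ∧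
    s ∈ Set.Ici (0:ℝ) ∧ r = |φ t p i s| / (1 + p)}

/-- Continuity and at most linear growth of `g : [0,∞) → ℝ`. -/
def gOK (g : ℝ → ℝ) : Prop :=
  ContinuousOn g (Set.Ici 0) ∧ ∃ Cg : ℝ, ∀ p ∈ Set.Ici (0:ℝ), |g p| ≤ Cg * (1 + p)

/-- The operator `𝒯`. -/
def Tmap (T δ : ℝ) (hp hm : ℝ → ℝ) (g : ℝ → ℝ) (w φ : ℝ → ℝ → ℕ → ℝ → ℝ)
    (t p : ℝ) (i : ℕ) (s : ℝ) : ℝ :=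
  g p * ((1 - Ff hp hm (T - t + s)) / (1 - Ff hp hm s))
  + (∫ v in t..T, (ff hp hm (v - t + s) / (1 - Ff hp hm s)) *
      ∑ j ∈ conjS i, pijf hp hm i j (v - t + s) * φ v (p * (1 + δ * alphaR j)) j 0)
  + ∫ v in t..T, ((1 - Ff hp hm (v - t + s)) / (1 - Ff hp hm s)) * w v p i (v - t + s)

/-- `𝒯₃(t,p,i,s) = ∫_t^T [(1−F(v−t+s))/(1−F(s))]·w(v,p,i,v−t+s) dv`. -/
def T3 (T : ℝ) (hp hm : ℝ → ℝ) (w : ℝ → ℝ → ℕ → ℝ → ℝ) (t p : ℝ) (i : ℕ) (s : ℝ) : ℝ :=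
  ∫ v in t..T, ((1 - Ff hp hm (v - t + s)) / (1 - Ff hp hm s)) * w v p i (v - t + s)

/-- `𝒯₃` has, at every point of `D°`, the directional derivative
`D_{t,s}𝒯₃(t,p,i,s) = lim_{ε→0} (𝒯₃(t+ε,p,i,s+ε) − 𝒯₃(t,p,i,s))/ε`, which is continuous
on `D°` and equals `∫_t^T [f(s)(1−F(v−t+s))/(1−F(s))²] w(v,p,i,v−t+s) dv − w(t,p,i,s)`. -/
theorem stmt8 (T : ℝ) (hT : 0 < T) (hp hm : ℝ → ℝ) (hA : hAssumptions hp hm)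
    (w : ℝ → ℝ → ℕ → ℝ → ℝ) (hw : memV T w) :
    ∀ i ∈ stateS,
      (∀ t p s : ℝ, t ∈ Set.Ioo (0:ℝ) T → p ∈ Set.Ioi (0:ℝ) → s ∈ Set.Ioi (0:ℝ) →
        HasDerivAt (fun e : ℝ => T3 T hp hm w (t + e) p i (s + e))
          ((∫ v in t..T, (ff hp hm s * (1 - Ff hp hm (v - t + s)) / (1 - Ff hp hm s) ^ 2) *
              w v p i (v - t + s)) - w t p i s) 0) ∧
      ContinuousOn (fun x : ℝ × ℝ × ℝ =>
          (∫ v in x.1..T,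
            (ff hp hm x.2.2 * (1 - Ff hp hm (v - x.1 + x.2.2)) / (1 - Ff hp hm x.2.2) ^ 2) *
              w v x.2.1 i (v - x.1 + x.2.2)) - w x.1 x.2.1 i x.2.2)
        (Set.Ioo 0 T ×ˢ Set.Ioi 0 ×ˢ Set.Ioi 0) := by
  
  obtain ⟨hpos, hpC, hmC, hc1, hip, him, hsumpos⟩ := hA
  have hsc : ContinuousOn (hsum hp hm) (Set.Ici 0) := hpC.continuousOn.add hmC.continuousOn
  set hE : ℝ → ℝ := fun y => hsum hp hm (max y 0) with hEdef
  have hEc : Continuous hE :=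
    hsc.comp_continuous (continuous_id.max continuous_const) fun x => le_max_right x 0
  set H : ℝ → ℝ := fun y => ∫ v in (0:ℝ)..y, hE v with Hdef
  have hHc : Continuous H :=
    intervalIntegral.continuous_primitive (fun a b => hEc.intervalIntegrable a b) 0
  have hHd : ∀ y : ℝ, HasDerivAt H (hE y) y := fun y =>
    intervalIntegral.integral_hasDerivAt_right (hEc.intervalIntegrable 0 y)
      (hEc.stronglyMeasurableAtFilter volume (nhds y)) hEc.continuousAt
  set FE : ℝ → ℝ := fun y => 1 - Real.exp (-(H y)) with FEdef
  set fE : ℝ → ℝ := fun y => hE y * Real.exp (-(H y)) with fEdef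
  have hFEc : Continuous FE := continuous_const.sub (Real.continuous_exp.comp hHc.neg)
  have hfEc : Continuous fE := hEc.mul (Real.continuous_exp.comp hHc.neg)
  have hFEd : ∀ y : ℝ, HasDerivAt FE (fE y) y := fun y => by
    have h := ((hHd y).neg.exp).const_sub 1
    simpa [FEdef, fEdef, mul_comm] using h
  have hFElt : ∀ y : ℝ, 0 < 1 - FE y := fun y => by
    have : (1:ℝ) - (1 - Real.exp (-(H y))) = Real.exp (-(H y)) := by ring
    simp only [FEdef, this]
    exact Real.exp_pos _
  have hFEne : ∀ y : ℝ, 1 - FE y ≠ 0 := fun y => (hFElt y).ne'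
  have hHeq : ∀ y : ℝ, 0 ≤ y → H y = ∫ v in (0:ℝ)..y, hsum hp hm v := by
    intro y hy
    apply intervalIntegral.integral_congr
    intro v hv
    rw [Set.uIcc_of_le hy] at hv
    simp [hEdef, max_eq_left hv.1]
  have hFEeq : ∀ y : ℝ, 0 ≤ y → FE y = Ff hp hm y := fun y hy => by
    simp [FEdef, Ff, hHeq y hy]
  have hfEeq : ∀ y : ℝ, 0 ≤ y → fE y = ff hp hm y := fun y hy => by
    simp [fEdef, ff, hHeq y hy, hEdef, max_eq_left hy]
  intro i hi
  have hS : IsClosed ((Set.Icc (0:ℝ) T) ×ˢ (Set.Ici (0:ℝ)) ×ˢ (Set.Ici (0:ℝ))) :=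
    isClosed_Icc.prod (isClosed_Ici.prod isClosed_Ici)
  obtain ⟨W, hWr⟩ := ContinuousMap.exists_restrict_eq (Y := ℝ) hS ⟨_, (hw.1 i hi).restrict⟩
  have hWc : Continuous W := W.continuous
  have hWeq : ∀ x ∈ (Set.Icc (0:ℝ) T) ×ˢ (Set.Ici (0:ℝ)) ×ˢ (Set.Ici (0:ℝ)),
      W x = w x.1 x.2.1 i x.2.2 := by
    intro x hx
    have h := DFunLike.congr_fun hWr (⟨x, hx⟩ : _)
    exact h
  -- key rewriting of the integral
  have key : ∀ t p s : ℝ, 0 < t → t < T → 0 < p → 0 < s →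
      (∫ v in t..T, (ff hp hm s * (1 - Ff hp hm (v - t + s)) / (1 - Ff hp hm s) ^ 2) *
        w v p i (v - t + s))
      = fE s / (1 - FE s) ^ 2 * ∫ v in t..T, (1 - FE (v - t + s)) * W (v, p, v - t + s) := by
    intro t p s ht0 htT hp0 hs0
    rw [← intervalIntegral.integral_const_mul]
    apply intervalIntegral.integral_congr
    intro v hv
    dsimp only
    rw [Set.uIcc_of_le htT.le] at hv
    have h1 : (0:ℝ) ≤ v - t + s := by
      have := hv.1; linarith
    have h2 : ((v, p, v - t + s) : ℝ × ℝ × ℝ) ∈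
        (Set.Icc (0:ℝ) T) ×ˢ (Set.Ici (0:ℝ)) ×ˢ (Set.Ici (0:ℝ)) := by
      refine ⟨⟨?_, hv.2⟩, hp0.le, h1⟩
      have := hv.1; linarith
    rw [hWeq _ h2, hFEeq _ h1, hfEeq s hs0.le, hFEeq s hs0.le]
    ring
  constructor
  · intro t p s ht hp0 hs0
    obtain ⟨ht0, htT⟩ := ht
    rw [Set.mem_Ioi] at hp0 hs0
    set k : ℝ → ℝ := fun v => (1 - FE (v - t + s)) * W (v, p, v - t + s) with kdef
    have hkc : Continuous k := by
      apply Continuous.mul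
      · exact continuous_const.sub (hFEc.comp (by fun_prop))
      · exact hWc.comp (by fun_prop)
    have hA1 : HasDerivAt (fun u => ∫ v in u..T, k v) (-(k t)) t :=
      intervalIntegral.integral_hasDerivAt_left (hkc.intervalIntegrable t T)
        (hkc.stronglyMeasurableAtFilter volume (nhds t)) hkc.continuousAt
    have hin : HasDerivAt (fun e : ℝ => t + e) 1 0 := by
      simpa using (hasDerivAt_id (0:ℝ)).const_add t
    have hin' : HasDerivAt (fun e : ℝ => s + e) 1 0 := by
      simpa using (hasDerivAt_id (0:ℝ)).const_add s
    have hAd : HasDerivAt (fun e : ℝ => ∫ v in (t + e)..T, k v) (-(k t)) 0 := by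
      have hA1' : HasDerivAt (fun u => ∫ v in u..T, k v) (-(k t)) (t + 0) := by
        simpa using hA1
      have h := hA1'.comp 0 hin
      rw [mul_one] at h
      exact h
    have hB1 : HasDerivAt (fun e : ℝ => 1 - FE (s + e)) (-(fE s)) 0 := by
      have h := (((hFEd (s + 0)).comp 0 hin').const_sub 1)
      simpa [Function.comp] using h
    have hBd : HasDerivAt (fun e : ℝ => (1 - FE (s + e))⁻¹) (fE s / (1 - FE s) ^ 2) 0 := by
      have h := hB1.inv (by simpa using hFEne (s + 0))
      simp [neg_div] at h
      exact h
    have hG : HasDerivAt (fun e : ℝ => (1 - FE (s + e))⁻¹ * ∫ v in (t + e)..T, k v)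
        (fE s / (1 - FE s) ^ 2 * (∫ v in t..T, k v) + (1 - FE s)⁻¹ * (-(k t))) 0 := by
      have h := hBd.mul hAd
      simp at h ⊢
      exact h
    have hts : ((t, p, s) : ℝ × ℝ × ℝ) ∈
        (Set.Icc (0:ℝ) T) ×ˢ (Set.Ici (0:ℝ)) ×ˢ (Set.Ici (0:ℝ)) :=
      ⟨⟨ht0.le, htT.le⟩, hp0.le, hs0.le⟩
    have hk_t : k t = (1 - FE s) * w t p i s := by
      simp only [kdef]
      rw [show t - t + s = s by ring, hWeq _ hts]
    have hfinal : (∫ v in t..T,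
          (ff hp hm s * (1 - Ff hp hm (v - t + s)) / (1 - Ff hp hm s) ^ 2) *
            w v p i (v - t + s)) - w t p i s
        = fE s / (1 - FE s) ^ 2 * (∫ v in t..T, k v) + (1 - FE s)⁻¹ * (-(k t)) := by
      rw [key t p s ht0 htT hp0 hs0, hk_t, mul_neg, inv_mul_cancel_left₀ (hFEne s)]
      ring
    have hε : 0 < min (min t s) (T - t) := lt_min (lt_min ht0 hs0) (by linarith)
    have hεt : min (min t s) (T - t) ≤ t := le_trans (min_le_left _ _) (min_le_left _ _)
    have hεs : min (min t s) (T - t) ≤ s := le_trans (min_le_left _ _) (min_le_right _ _)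
    have hεT : min (min t s) (T - t) ≤ T - t := min_le_right _ _
    have heq : (fun e : ℝ => T3 T hp hm w (t + e) p i (s + e)) =ᶠ[nhds 0]
        (fun e : ℝ => (1 - FE (s + e))⁻¹ * ∫ v in (t + e)..T, k v) := by
      filter_upwards [Ioo_mem_nhds (neg_lt_zero.mpr hε) hε] with e he
      obtain ⟨he1, he2⟩ := he
      have hte0 : 0 < t + e := by linarith
      have hteT : t + e < T := by linarith
      have hse0 : 0 < s + e := by linarith
      rw [T3, ← intervalIntegral.integral_const_mul]
      apply intervalIntegral.integral_congr
      intro v hv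
      dsimp only
      rw [Set.uIcc_of_le hteT.le] at hv
      have harg : v - (t + e) + (s + e) = v - t + s := by ring
      have h1 : (0:ℝ) ≤ v - t + s := by
        have := hv.1; linarith
      have h2 : ((v, p, v - t + s) : ℝ × ℝ × ℝ) ∈
          (Set.Icc (0:ℝ) T) ×ˢ (Set.Ici (0:ℝ)) ×ˢ (Set.Ici (0:ℝ)) := by
        refine ⟨⟨?_, hv.2⟩, hp0.le, h1⟩
        have := hv.1; linarith
      rw [harg]
      simp only [kdef]
      rw [hWeq _ h2, hFEeq _ h1, hFEeq _ hse0.le]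
      ring
    rw [hfinal]
    exact hG.congr_of_eventuallyEq heq
  · have hsub : (Set.Ioo (0:ℝ) T) ×ˢ (Set.Ioi (0:ℝ)) ×ˢ (Set.Ioi (0:ℝ)) ⊆
        (Set.Icc (0:ℝ) T) ×ˢ (Set.Ici (0:ℝ)) ×ˢ (Set.Ici (0:ℝ)) :=
      Set.prod_mono Set.Ioo_subset_Icc_self
        (Set.prod_mono Set.Ioi_subset_Ici_self Set.Ioi_subset_Ici_self)
    have hKc : Continuous (Function.uncurry fun (x : ℝ × ℝ × ℝ) (v : ℝ) =>
        (1 - FE (v - x.1 + x.2.2)) * W (v, x.2.1, v - x.1 + x.2.2)) := by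
      apply Continuous.mul
      · exact continuous_const.sub (hFEc.comp (by fun_prop))
      · exact hWc.comp (by fun_prop)
    have hJc : Continuous fun x : ℝ × ℝ × ℝ =>
        ∫ v in T..x.1, (1 - FE (v - x.1 + x.2.2)) * W (v, x.2.1, v - x.1 + x.2.2) :=
      intervalIntegral.continuous_parametric_intervalIntegral_of_continuous hKc continuous_fst
    have hNc : Continuous fun x : ℝ × ℝ × ℝ =>
        fE x.2.2 / (1 - FE x.2.2) ^ 2 *
          (-(∫ v in T..x.1, (1 - FE (v - x.1 + x.2.2)) * W (v, x.2.1, v - x.1 + x.2.2))) := by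
      apply Continuous.mul
      · exact (hfEc.comp continuous_snd.snd).div
          ((continuous_const.sub (hFEc.comp continuous_snd.snd)).pow 2)
          (fun x => pow_ne_zero 2 (hFEne _))
      · exact hJc.neg
    apply ContinuousOn.congr (f := fun x : ℝ × ℝ × ℝ =>
      fE x.2.2 / (1 - FE x.2.2) ^ 2 *
        (-(∫ v in T..x.1, (1 - FE (v - x.1 + x.2.2)) * W (v, x.2.1, v - x.1 + x.2.2)))
      - w x.1 x.2.1 i x.2.2)
    · exact hNc.continuousOn.sub ((hw.1 i hi).mono hsub)
    · rintro ⟨t, p, s⟩ ⟨ht, hp0, hs0⟩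
      rw [Set.mem_Ioi] at hp0 hs0
      dsimp only
      rw [key t p s ht.1 ht.2 hp0 hs0, intervalIntegral.integral_symm t T, neg_neg]
end
end

section
/- There exists a function π ∈ V which has continuous partial derivatives in t and s on D° and satisfies, for all (t,p,i,s) ∈ D°, the linear partial differential equation ∂π/∂t + ∂π/∂s + Σ_{j≢i} h_{ij}(s)·(π(t, p(1+δα(j)), j, 0) − π(t,p,i,s)) = 0, together with the terminal condition π(T,p,i,s) = p for all (p,i,s) ∈ [0,∞)×𝒳×[0,∞). -/
open MeasureTheory Filter Set Finset intervalIntegral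

noncomputable section

namespace Stmt12Aux
open Topology BoundedContinuousFunction


/-- C¹ extension of a function on `Ici 0` to `ℝ` by its linearization at `0`. -/
def extD (f : ℝ → ℝ) : ℝ → ℝ := fun y =>
  if y ≤ 0 then f 0 + derivWithin f (Set.Ici 0) 0 * y else f y

def extD' (f : ℝ → ℝ) : ℝ → ℝ := fun y => derivWithin f (Set.Ici 0) (max y 0)

theorem extD_eq {f : ℝ → ℝ} {y : ℝ} (hy : 0 ≤ y) : extD f y = f y := by
  unfold extD
  rcases eq_or_lt_of_le hy with h | h
  · simp [← h]
  · rw [if_neg (not_le.mpr h)]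

theorem extD_hasDerivAt {f : ℝ → ℝ} (hf : ContDiffOn ℝ 1 f (Set.Ici 0)) (y : ℝ) :
    HasDerivAt (extD f) (extD' f y) y := by
  rcases lt_trichotomy y 0 with hy | hy | hy
  · have haff : HasDerivAt (fun z : ℝ => f 0 + derivWithin f (Set.Ici 0) 0 * z)
        (derivWithin f (Set.Ici 0) 0) y := by
      simpa using ((hasDerivAt_id y).const_mul (derivWithin f (Set.Ici 0) 0)).const_add (f 0)
    have hval : extD' f y = derivWithin f (Set.Ici 0) 0 := by
      unfold extD'; rw [max_eq_right hy.le]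
    rw [hval]
    refine haff.congr_of_eventuallyEq ?_
    filter_upwards [Iio_mem_nhds hy] with z hz
    simp [extD, (Set.mem_Iio.mp hz).le]
  · subst hy
    have hd : DifferentiableWithinAt ℝ f (Set.Ici 0) 0 :=
      (hf.differentiableOn one_ne_zero) 0 Set.self_mem_Ici
    have hR : HasDerivWithinAt (extD f) (derivWithin f (Set.Ici 0) 0) (Set.Ici 0) 0 :=
      hd.hasDerivWithinAt.congr (fun z hz => extD_eq hz) (extD_eq le_rfl)
    have hL : HasDerivWithinAt (extD f) (derivWithin f (Set.Ici 0) 0) (Set.Iic 0) 0 := by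
      have haff : HasDerivAt (fun z : ℝ => f 0 + derivWithin f (Set.Ici 0) 0 * z)
          (derivWithin f (Set.Ici 0) 0) 0 := by
        simpa using ((hasDerivAt_id 0).const_mul (derivWithin f (Set.Ici 0) 0)).const_add (f 0)
      refine haff.hasDerivWithinAt.congr (fun z hz => ?_) ?_
      · simp [extD, Set.mem_Iic.mp hz]
      · simp [extD]
    have hU := hL.union hR
    rw [Set.Iic_union_Ici] at hU
    have h0 : extD' f 0 = derivWithin f (Set.Ici 0) 0 := by simp [extD']
    rw [h0]
    simpa [hasDerivWithinAt_univ] using hU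
  · have hmem : Set.Ici (0:ℝ) ∈ 𝓝 y := Ici_mem_nhds hy
    have hd : DifferentiableWithinAt ℝ f (Set.Ici 0) y :=
      (hf.differentiableOn one_ne_zero) y (Set.mem_Ici.mpr hy.le)
    have hda : DifferentiableAt ℝ f y := hd.differentiableAt hmem
    have hval : extD' f y = deriv f y := by
      unfold extD'; rw [max_eq_left hy.le, derivWithin_of_mem_nhds hmem]
    rw [hval]
    refine hda.hasDerivAt.congr_of_eventuallyEq ?_
    filter_upwards [Ioi_mem_nhds hy] with z hz
    exact extD_eq (Set.mem_Ioi.mp hz).le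

theorem extD'_continuous {f : ℝ → ℝ} (hf : ContDiffOn ℝ 1 f (Set.Ici 0)) :
    Continuous (extD' f) := by
  have h1 : ContinuousOn (derivWithin f (Set.Ici 0)) (Set.Ici 0) :=
    hf.continuousOn_derivWithin (uniqueDiffOn_Ici 0) le_rfl
  exact h1.comp_continuous (continuous_id.max continuous_const)
    fun x => Set.mem_Ici.mpr (le_max_right _ _)

theorem extD_continuous {f : ℝ → ℝ} (hf : ContDiffOn ℝ 1 f (Set.Ici 0)) :
    Continuous (extD f) :=
  continuous_iff_continuousAt.mpr fun y => (extD_hasDerivAt hf y).continuousAt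

/-- Derivative of `x ↦ ∫ v in x..x₀, g (x, v)` at `x₀`, for jointly continuous `g`. -/
theorem hasDerivAt_integral_endpoint {g : ℝ × ℝ → ℝ} (hg : Continuous g) (x₀ : ℝ) :
    HasDerivAt (fun x => ∫ v in x..x₀, g (x, v)) (-g (x₀, x₀)) x₀ := by
  rw [hasDerivAt_iff_isLittleO, Asymptotics.isLittleO_iff]
  intro c hc
  have hct : ContinuousAt g (x₀, x₀) := hg.continuousAt
  rw [Metric.continuousAt_iff] at hct
  obtain ⟨d, hd, hball⟩ := hct c hc
  filter_upwards [Metric.ball_mem_nhds x₀ hd] with x hx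
  have hxd : |x - x₀| < d := by simpa [Real.dist_eq] using hx
  have hint : IntervalIntegrable (fun v => g (x, v)) volume x x₀ :=
    (hg.comp (continuous_const.prodMk continuous_id)).intervalIntegrable _ _
  have e1 : (∫ v in x..x₀, g (x, v)) - (∫ v in x₀..x₀, g (x₀, v)) - (x - x₀) • (-g (x₀, x₀))
      = ∫ v in x..x₀, (g (x, v) - g (x₀, x₀)) := by
    rw [intervalIntegral.integral_same,
      intervalIntegral.integral_sub hint intervalIntegrable_const,
      intervalIntegral.integral_const]
    simp only [smul_eq_mul, sub_zero]
    ring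
  rw [e1]
  have hbound : ∀ v ∈ Set.uIoc x x₀, ‖g (x, v) - g (x₀, x₀)‖ ≤ c := by
    intro v hv
    have hv' : v ∈ Set.uIcc x x₀ := Set.uIoc_subset_uIcc hv
    have h1 : |v - x₀| ≤ |x - x₀| := by
      have hA := neg_abs_le (x - x₀)
      have hB := le_abs_self (x - x₀)
      have hC := abs_nonneg (x - x₀)
      rw [abs_le]
      rcases Set.mem_uIcc.mp hv' with ⟨ha, hb⟩ | ⟨ha, hb⟩ <;> constructor <;> linarith
    have hdist : dist (x, v) (x₀, x₀) < d := by
      rw [Prod.dist_eq]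
      simp only [Real.dist_eq, max_lt_iff]
      exact ⟨hxd, lt_of_le_of_lt h1 hxd⟩
    exact le_of_lt (by simpa [Real.dist_eq] using hball hdist)
  calc ‖∫ v in x..x₀, (g (x, v) - g (x₀, x₀))‖ ≤ c * |x₀ - x| :=
        intervalIntegral.norm_integral_le_of_norm_le_const hbound
    _ = c * ‖x - x₀‖ := by rw [Real.norm_eq_abs, abs_sub_comm]

set_option maxHeartbeats 1000000 in
/-- Differentiation under the integral for `η ↦ ∫ v in c..d, N v (v + η)`. -/
theorem hasDerivAt_integral_param {N N' : ℝ → ℝ → ℝ}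
    (hN : Continuous fun q : ℝ × ℝ => N q.1 q.2)
    (hN' : Continuous fun q : ℝ × ℝ => N' q.1 q.2)
    (hd : ∀ v r, HasDerivAt (fun r => N v r) (N' v r) r) (c d η₀ : ℝ) :
    HasDerivAt (fun η => ∫ v in c..d, N v (v + η)) (∫ v in c..d, N' v (v + η₀)) η₀ := by
  obtain ⟨B, hB⟩ : ∃ B, ∀ q ∈ (Set.uIcc c d ×ˢ Set.Icc (η₀ - 1) (η₀ + 1)),
      ‖(fun q : ℝ × ℝ => N' q.1 (q.1 + q.2)) q‖ ≤ B := by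
    apply (isCompact_uIcc.prod isCompact_Icc).exists_bound_of_continuousOn
    exact (hN'.comp ((continuous_fst).prodMk (continuous_fst.add continuous_snd))).continuousOn
  have hmeas : ∀ᶠ η in 𝓝 η₀,
      AEStronglyMeasurable (fun v => N v (v + η)) (volume.restrict (Set.uIoc c d)) := by
    filter_upwards with η
    exact ((hN.comp (continuous_id.prodMk (continuous_id.add continuous_const)))).aestronglyMeasurable
  have hint : IntervalIntegrable (fun v => N v (v + η₀)) volume c d :=
    (hN.comp (continuous_id.prodMk (continuous_id.add continuous_const))).intervalIntegrable _ _
  have h'meas : AEStronglyMeasurable (fun v => N' v (v + η₀)) (volume.restrict (Set.uIoc c d)) :=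
    ((hN'.comp (continuous_id.prodMk (continuous_id.add continuous_const)))).aestronglyMeasurable
  have hbound : ∀ᵐ v ∂volume, v ∈ Set.uIoc c d →
      ∀ η ∈ Metric.ball η₀ 1, ‖N' v (v + η)‖ ≤ B := by
    filter_upwards with v hv η hη
    have hη' : η ∈ Set.Icc (η₀ - 1) (η₀ + 1) := by
      have := Metric.mem_ball.mp hη
      rw [Real.dist_eq, abs_lt] at this
      constructor <;> linarith [this.1, this.2]
    exact hB (v, η) ⟨Set.uIoc_subset_uIcc hv, hη'⟩
  have hdiff : ∀ᵐ v ∂volume, v ∈ Set.uIoc c d →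
      ∀ η ∈ Metric.ball η₀ 1, HasDerivAt (fun η => N v (v + η)) (N' v (v + η)) η := by
    filter_upwards with v _ η _
    have := (hd v (v + η)).comp η ((hasDerivAt_id η).const_add v)
    simp only [mul_one] at this; exact this
  exact (intervalIntegral.hasDerivAt_integral_of_dominated_loc_of_deriv_le (Metric.ball_mem_nhds η₀ one_pos)
    hmeas hint h'meas hbound intervalIntegrable_const hdiff).2



theorem exists_volterra (T δ c1 : ℝ) (hT : 0 < T) (hδ : 0 < δ) (hc1 : 0 ≤ c1)
    (HH hpE hmE : ℝ → ℝ) (hHHc : Continuous HH)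
    (hcp : Continuous hpE) (hcm : Continuous hmE)
    (hbp : ∀ y, 0 ≤ y → |hpE y| ≤ c1) (hbm : ∀ y, 0 ≤ y → |hmE y| ≤ c1)
    (hHHnn : ∀ u, 0 ≤ u → 0 ≤ HH u) :
    ∃ aF bF : ℝ → ℝ, Continuous aF ∧ Continuous bF ∧
      (∃ CX : ℝ, 0 ≤ CX ∧ ∀ t, t ∈ Set.Icc (0:ℝ) T → |aF t| ≤ CX ∧ |bF t| ≤ CX) ∧
      (∀ t ∈ Set.Icc (0:ℝ) T, aF t = Real.exp (-HH (T - t)) +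
        ∫ v in t..T, Real.exp (-HH (v - t)) *
          ((1 - δ) * hpE (v - t) * aF v + (1 + δ) * hmE (v - t) * bF v)) ∧
      (∀ t ∈ Set.Icc (0:ℝ) T, bF t = Real.exp (-HH (T - t)) +
        ∫ v in t..T, Real.exp (-HH (v - t)) *
          ((1 - δ) * hmE (v - t) * aF v + (1 + δ) * hpE (v - t) * bF v)) := by
  have hT0 : (0:ℝ) ≤ T := hT.le
  set L : ℝ := 4 * (c1 + 1) * (1 + δ) with hLdef
  have hL : 0 < L := by nlinarith
  set cl : ℝ → ℝ := fun t => max 0 (min t T) with hcl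
  have hclc : Continuous cl := continuous_const.max (continuous_id.min continuous_const)
  have hcl0 : ∀ t, 0 ≤ cl t := fun t => le_max_left _ _
  have hclT : ∀ t, cl t ≤ T := fun t => max_le hT0 (min_le_right _ _)
  have hcleq : ∀ t ∈ Set.Icc (0:ℝ) T, cl t = t := fun t ht => by
    simp [hcl, min_eq_left ht.2, max_eq_right ht.1]
  set ee : ℝ → ℝ := fun u => Real.exp (-(L * u) - HH u) with hee
  have heec : Continuous ee := by simp only [hee]; fun_prop
  set k1 : (ℝ →ᵇ ℝ × ℝ) → ℝ → ℝ → ℝ := fun f u v =>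
    ee (v - u) * ((1 - δ) * hpE (v - u) * (f v).1 + (1 + δ) * hmE (v - u) * (f v).2) with hk1
  set k2 : (ℝ →ᵇ ℝ × ℝ) → ℝ → ℝ → ℝ := fun f u v =>
    ee (v - u) * ((1 - δ) * hmE (v - u) * (f v).1 + (1 + δ) * hpE (v - u) * (f v).2) with hk2
  have hkc1 : ∀ f : ℝ →ᵇ ℝ × ℝ, Continuous (fun q : ℝ × ℝ => k1 f q.1 q.2) := by
    intro f; have hfc := f.continuous
    simp only [hk1]; fun_prop
  have hkc2 : ∀ f : ℝ →ᵇ ℝ × ℝ, Continuous (fun q : ℝ × ℝ => k2 f q.1 q.2) := by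
    intro f; have hfc := f.continuous
    simp only [hk2]; fun_prop
  set AA : (ℝ →ᵇ ℝ × ℝ) → ℝ → ℝ := fun f u =>
    Real.exp (-(L * (T - u)) - HH (T - u)) + ∫ v in u..T, k1 f u v with hAA
  set BB : (ℝ →ᵇ ℝ × ℝ) → ℝ → ℝ := fun f u =>
    Real.exp (-(L * (T - u)) - HH (T - u)) + ∫ v in u..T, k2 f u v with hBB
  have hparam : ∀ (k : (ℝ →ᵇ ℝ × ℝ) → ℝ → ℝ → ℝ), ∀ f : ℝ →ᵇ ℝ × ℝ,
      Continuous (fun q : ℝ × ℝ => k f q.1 q.2) →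
      Continuous (fun u => ∫ v in u..T, k f u v) := by
    intro k f hk
    have h1 : Continuous fun u : ℝ => ∫ v in T..u, k f u v :=
      intervalIntegral.continuous_parametric_intervalIntegral_of_continuous
        (f := fun u v => k f u v) (by rw [Function.uncurry_def]; exact hk) continuous_id
    have h2 : (fun u : ℝ => ∫ v in u..T, k f u v) = fun u => -∫ v in T..u, k f u v := by
      funext u; rw [intervalIntegral.integral_symm]
    rw [h2]; exact h1.neg
  have hABc : ∀ f : ℝ →ᵇ ℝ × ℝ, Continuous (fun u => (AA f u, BB f u)) := by
    intro f
    apply Continuous.prodMk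
    · simp only [hAA]
      exact (by fun_prop : Continuous fun u => Real.exp (-(L * (T - u)) - HH (T - u))).add
        (hparam k1 f (hkc1 f))
    · simp only [hBB]
      exact (by fun_prop : Continuous fun u => Real.exp (-(L * (T - u)) - HH (T - u))).add
        (hparam k2 f (hkc2 f))
  have hExists : ∀ f : ℝ →ᵇ ℝ × ℝ, ∃ C, ∀ u ∈ Set.Icc (0:ℝ) T,
      ‖((AA f u, BB f u) : ℝ × ℝ)‖ ≤ C :=
    fun f => isCompact_Icc.exists_bound_of_continuousOn (hABc f).continuousOn
  choose Cb hCb using hExists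
  set Φ : (ℝ →ᵇ ℝ × ℝ) → (ℝ →ᵇ ℝ × ℝ) := fun f =>
    ⟨⟨fun t => (AA f (cl t), BB f (cl t)), (hABc f).comp hclc⟩,
      ⟨Cb f + Cb f, fun x y => le_trans (dist_le_norm_add_norm _ _)
        (add_le_add (hCb f _ ⟨hcl0 x, hclT x⟩) (hCb f _ ⟨hcl0 y, hclT y⟩))⟩⟩ with hΦ
  -- exact exponential integral
  have hExpInt : ∀ u : ℝ,
      (∫ v in u..T, Real.exp (-(L * (v - u)))) = (1 - Real.exp (-(L * (T - u)))) / L := by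
    intro u
    have hder : ∀ v ∈ Set.uIcc u T, HasDerivAt (fun v => -(Real.exp (-(L * (v - u))) / L))
        (Real.exp (-(L * (v - u)))) v := by
      intro v _
      have h1 : HasDerivAt (fun v : ℝ => -(L * (v - u))) (-L) v := by
        have := (((hasDerivAt_id' v).sub_const u).const_mul L).neg
        simp only [mul_one] at this; exact this
      have h2 := (h1.exp.div_const L).neg
      refine h2.congr_deriv ?_
      rw [mul_neg, neg_div, neg_neg, mul_div_assoc, div_self hL.ne', mul_one]
    rw [intervalIntegral.integral_eq_sub_of_hasDerivAt hder
      ((by fun_prop : Continuous fun v : ℝ => Real.exp (-(L * (v - u)))).intervalIntegrable _ _)]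
    rw [sub_self, mul_zero, neg_zero, Real.exp_zero]
    ring
  -- the key contraction estimate for one component
  have hDistEst : ∀ (f g : ℝ →ᵇ ℝ × ℝ) (u : ℝ), 0 ≤ u → u ≤ T →
      ∀ (q1 q2 : ℝ → ℝ), Continuous q1 → Continuous q2 →
      (∀ y, 0 ≤ y → |q1 y| ≤ c1) → (∀ y, 0 ≤ y → |q2 y| ≤ c1) →
      |(∫ v in u..T, ee (v-u) * ((1-δ) * q1 (v-u) * (f v).1 + (1+δ) * q2 (v-u) * (f v).2))
        - ∫ v in u..T, ee (v-u) * ((1-δ) * q1 (v-u) * (g v).1 + (1+δ) * q2 (v-u) * (g v).2)|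
        ≤ (1/2) * dist f g := by
    intro f g u hu0 huT q1 q2 hq1c hq2c hq1 hq2
    have hfc := f.continuous; have hgc := g.continuous
    set D := dist f g with hD
    have hD0 : 0 ≤ D := dist_nonneg
    have hi1 : IntervalIntegrable
        (fun v => ee (v-u) * ((1-δ) * q1 (v-u) * (f v).1 + (1+δ) * q2 (v-u) * (f v).2))
        volume u T := by
      apply Continuous.intervalIntegrable; simp only [hee]; fun_prop
    have hi2 : IntervalIntegrable
        (fun v => ee (v-u) * ((1-δ) * q1 (v-u) * (g v).1 + (1+δ) * q2 (v-u) * (g v).2))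
        volume u T := by
      apply Continuous.intervalIntegrable; simp only [hee]; fun_prop
    rw [← intervalIntegral.integral_sub hi1 hi2]
    have hpt : ∀ᵐ v ∂volume.restrict (Set.uIoc u T),
        ‖ee (v-u) * ((1-δ) * q1 (v-u) * (f v).1 + (1+δ) * q2 (v-u) * (f v).2)
          - ee (v-u) * ((1-δ) * q1 (v-u) * (g v).1 + (1+δ) * q2 (v-u) * (g v).2)‖
          ≤ (2*(1+δ)*c1*D) * Real.exp (-(L*(v-u))) := by
      rw [ae_restrict_iff' measurableSet_uIoc]
      filter_upwards with v hv
      rw [Set.uIoc_of_le huT] at hv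
      have hvu : 0 ≤ v - u := by linarith [hv.1]
      have hee1 : ee (v-u) ≤ Real.exp (-(L*(v-u))) := by
        simp only [hee]
        exact Real.exp_le_exp.mpr (by linarith [hHHnn _ hvu])
      have hee0 : 0 ≤ ee (v-u) := by simp only [hee]; positivity
      have hdd : dist (f v) (g v) ≤ D := BoundedContinuousFunction.dist_coe_le_dist v
      rw [Prod.dist_eq] at hdd
      have hd1 : |(f v).1 - (g v).1| ≤ D := by
        rw [← Real.dist_eq]
        exact le_trans (le_max_left (dist (f v).1 (g v).1) (dist (f v).2 (g v).2)) hdd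
      have hd2 : |(f v).2 - (g v).2| ≤ D := by
        rw [← Real.dist_eq]
        exact le_trans (le_max_right (dist (f v).1 (g v).1) (dist (f v).2 (g v).2)) hdd
      have habs : |1 - δ| ≤ 1 + δ := by rw [abs_le]; constructor <;> linarith
      have e0 : ee (v-u) * ((1-δ) * q1 (v-u) * (f v).1 + (1+δ) * q2 (v-u) * (f v).2)
          - ee (v-u) * ((1-δ) * q1 (v-u) * (g v).1 + (1+δ) * q2 (v-u) * (g v).2)
          = ee (v-u) * ((1-δ) * q1 (v-u) * ((f v).1 - (g v).1)
            + (1+δ) * q2 (v-u) * ((f v).2 - (g v).2)) := by ring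
      rw [Real.norm_eq_abs, e0, abs_mul, abs_of_nonneg hee0]
      calc ee (v-u) * |(1-δ) * q1 (v-u) * ((f v).1 - (g v).1)
            + (1+δ) * q2 (v-u) * ((f v).2 - (g v).2)|
          ≤ ee (v-u) * ((1+δ) * c1 * D + (1+δ) * c1 * D) := by
            apply mul_le_mul_of_nonneg_left _ hee0
            refine le_trans (abs_add_le _ _) (add_le_add ?_ ?_)
            · rw [abs_mul, abs_mul]
              exact mul_le_mul (mul_le_mul habs (hq1 _ hvu) (abs_nonneg _)
                (by linarith)) hd1 (abs_nonneg _) (by positivity)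
            · rw [abs_mul, abs_mul, abs_of_nonneg (by linarith : (0:ℝ) ≤ 1 + δ)]
              exact mul_le_mul (mul_le_mul le_rfl (hq2 _ hvu) (abs_nonneg _)
                (by linarith)) hd2 (abs_nonneg _) (by positivity)
        _ = (2*(1+δ)*c1*D) * ee (v-u) := by ring
        _ ≤ (2*(1+δ)*c1*D) * Real.exp (-(L*(v-u))) := by
            apply mul_le_mul_of_nonneg_left hee1 (by positivity)
    have hbi : IntervalIntegrable (fun v => (2*(1+δ)*c1*D) * Real.exp (-(L*(v-u))))
        volume u T := by apply Continuous.intervalIntegrable; fun_prop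
    have hnorm := intervalIntegral.norm_integral_le_abs_of_norm_le hpt hbi
    rw [Real.norm_eq_abs] at hnorm
    refine le_trans hnorm ?_
    rw [intervalIntegral.integral_const_mul, hExpInt u]
    have hle1 : Real.exp (-(L*(T-u))) ≤ 1 := Real.exp_le_one_iff.mpr (by nlinarith)
    have hge0 : (0:ℝ) ≤ Real.exp (-(L*(T-u))) := Real.exp_nonneg _
    have hnn : (0:ℝ) ≤ (1 - Real.exp (-(L*(T-u)))) / L := div_nonneg (by linarith) hL.le
    rw [abs_of_nonneg (mul_nonneg (by positivity) hnn)]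
    calc (2*(1+δ)*c1*D) * ((1 - Real.exp (-(L*(T-u)))) / L)
        ≤ (2*(1+δ)*c1*D) * (1 / L) := by gcongr; linarith
      _ ≤ (1/2) * D := by
          rw [mul_one_div, div_le_iff₀ hL, hLdef]
          nlinarith [mul_nonneg hD0 hδ.le, mul_nonneg (mul_nonneg hD0 hδ.le) hc1,
            mul_nonneg hD0 hc1]
  -- contraction
  haveI : Nonempty (ℝ →ᵇ ℝ × ℝ) := ⟨0⟩
  have hcontr : ContractingWith (1/2 : NNReal) Φ := by
    constructor
    · rw [← NNReal.coe_lt_coe]; norm_num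
    · refine LipschitzWith.of_dist_le_mul fun f g => ?_
      have hc : ((1/2 : NNReal) : ℝ) = 1/2 := by norm_num
      rw [hc]
      rw [BoundedContinuousFunction.dist_le (by positivity)]
      intro t
      have hΦt : ∀ h : ℝ →ᵇ ℝ × ℝ, Φ h t = (AA h (cl t), BB h (cl t)) := fun h => rfl
      rw [hΦt f, hΦt g, Prod.dist_eq]
      apply max_le
      · rw [Real.dist_eq]
        simp only [hAA, hk1, add_sub_add_left_eq_sub]
        exact hDistEst f g (cl t) (hcl0 t) (hclT t) hpE hmE hcp hcm hbp hbm
      · rw [Real.dist_eq]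
        simp only [hBB, hk2, add_sub_add_left_eq_sub]
        exact hDistEst f g (cl t) (hcl0 t) (hclT t) hmE hpE hcm hcp hbm hbp
  set fp := ContractingWith.fixedPoint Φ hcontr with hfpdef
  have hfix : Φ fp = fp := hcontr.fixedPoint_isFixedPt
  have hfpc := fp.continuous
  set aF : ℝ → ℝ := fun t => Real.exp (L * (T - t)) * (fp t).1 with haF
  set bF : ℝ → ℝ := fun t => Real.exp (L * (T - t)) * (fp t).2 with hbF
  have hfixt : ∀ t ∈ Set.Icc (0:ℝ) T, fp t = (AA fp t, BB fp t) := by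
    intro t ht
    conv_lhs => rw [← hfix]
    have : Φ fp t = (AA fp (cl t), BB fp (cl t)) := rfl
    rw [this, hcleq t ht]
  refine ⟨aF, bF, by simp only [haF]; fun_prop, by simp only [hbF]; fun_prop, ?_, ?_, ?_⟩
  · refine ⟨Real.exp (L*T) * ‖fp‖, by positivity, fun t ht => ?_⟩
    have h1 : Real.exp (L*(T-t)) ≤ Real.exp (L*T) :=
      Real.exp_le_exp.mpr (by nlinarith [ht.1, ht.2])
    have hn : ‖fp t‖ ≤ ‖fp‖ := BoundedContinuousFunction.norm_coe_le_norm fp t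
    constructor
    · simp only [haF, abs_mul, Real.abs_exp]
      exact mul_le_mul h1 (le_trans (norm_fst_le (fp t)) hn) (abs_nonneg _) (Real.exp_nonneg _)
    · simp only [hbF, abs_mul, Real.abs_exp]
      exact mul_le_mul h1 (le_trans (norm_snd_le (fp t)) hn) (abs_nonneg _) (Real.exp_nonneg _)
  · intro t ht
    have h1 : (fp t).1 = AA fp t := by rw [hfixt t ht]
    have e2 : aF t = Real.exp (L * (T - t)) * AA fp t := by simp only [haF]; rw [h1]
    rw [e2]
    simp only [hAA]
    rw [mul_add]
    congr 1
    · rw [← Real.exp_add]; congr 1; ring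
    · rw [← intervalIntegral.integral_const_mul]
      apply intervalIntegral.integral_congr
      intro v _
      simp only [hk1, hee, haF, hbF]
      have e1 : Real.exp (L*(T-t)) * Real.exp (-(L*(v-t)) - HH (v-t))
          = Real.exp (-HH (v-t)) * Real.exp (L*(T-v)) := by
        rw [← Real.exp_add, ← Real.exp_add]; congr 1; ring
      calc Real.exp (L*(T-t)) * (Real.exp (-(L*(v-t)) - HH (v-t))
            * ((1-δ) * hpE (v-t) * (fp v).1 + (1+δ) * hmE (v-t) * (fp v).2))
          = (Real.exp (L*(T-t)) * Real.exp (-(L*(v-t)) - HH (v-t)))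
            * ((1-δ) * hpE (v-t) * (fp v).1 + (1+δ) * hmE (v-t) * (fp v).2) := by ring
        _ = (Real.exp (-HH (v-t)) * Real.exp (L*(T-v)))
            * ((1-δ) * hpE (v-t) * (fp v).1 + (1+δ) * hmE (v-t) * (fp v).2) := by rw [e1]
        _ = Real.exp (-HH (v-t)) * ((1-δ) * hpE (v-t) * (Real.exp (L*(T-v)) * (fp v).1)
            + (1+δ) * hmE (v-t) * (Real.exp (L*(T-v)) * (fp v).2)) := by ring
  · intro t ht
    have h1 : (fp t).2 = BB fp t := by rw [hfixt t ht]
    have e2 : bF t = Real.exp (L * (T - t)) * BB fp t := by simp only [hbF]; rw [h1]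
    rw [e2]
    simp only [hBB]
    rw [mul_add]
    congr 1
    · rw [← Real.exp_add]; congr 1; ring
    · rw [← intervalIntegral.integral_const_mul]
      apply intervalIntegral.integral_congr
      intro v _
      simp only [hk2, hee, haF, hbF]
      have e1 : Real.exp (L*(T-t)) * Real.exp (-(L*(v-t)) - HH (v-t))
          = Real.exp (-HH (v-t)) * Real.exp (L*(T-v)) := by
        rw [← Real.exp_add, ← Real.exp_add]; congr 1; ring
      calc Real.exp (L*(T-t)) * (Real.exp (-(L*(v-t)) - HH (v-t))
            * ((1-δ) * hmE (v-t) * (fp v).1 + (1+δ) * hpE (v-t) * (fp v).2))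
          = (Real.exp (L*(T-t)) * Real.exp (-(L*(v-t)) - HH (v-t)))
            * ((1-δ) * hmE (v-t) * (fp v).1 + (1+δ) * hpE (v-t) * (fp v).2) := by ring
        _ = (Real.exp (-HH (v-t)) * Real.exp (L*(T-v)))
            * ((1-δ) * hmE (v-t) * (fp v).1 + (1+δ) * hpE (v-t) * (fp v).2) := by rw [e1]
        _ = Real.exp (-HH (v-t)) * ((1-δ) * hmE (v-t) * (Real.exp (L*(T-v)) * (fp v).1)
            + (1+δ) * hpE (v-t) * (Real.exp (L*(T-v)) * (fp v).2)) := by ring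


end Stmt12Aux

set_option maxHeartbeats 2000000

/-- There exists `π ∈ V` with continuous partial derivatives in `t` and `s` on `D°`
satisfying `∂π/∂t + ∂π/∂s + Σ_{j≢i} h_{ij}(s)(π(t,p(1+δα(j)),j,0) − π(t,p,i,s)) = 0`
on `D°` and `π(T,p,i,s) = p`. -/
theorem stmt12 (T δ : ℝ) (hT : 0 < T) (hδ : 0 < δ) (hp hm : ℝ → ℝ)
    (hA : hAssumptions hp hm) :
    ∃ pStar pT pS : ℝ → ℝ → ℕ → ℝ → ℝ, memV T pStar ∧
      (∀ i ∈ stateS, ∀ t p s : ℝ,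
        t ∈ Set.Ioo (0:ℝ) T → p ∈ Set.Ioi (0:ℝ) → s ∈ Set.Ioi (0:ℝ) →
          HasDerivAt (fun t' => pStar t' p i s) (pT t p i s) t ∧
          HasDerivAt (fun s' => pStar t p i s') (pS t p i s) s ∧
          pT t p i s + pS t p i s +
            (∑ j ∈ conjS i, hijf hp hm i j s *
              (pStar t (p * (1 + δ * alphaR j)) j 0 - pStar t p i s)) = 0) ∧
      (∀ i ∈ stateS,
        ContinuousOn (fun x : ℝ × ℝ × ℝ => pT x.1 x.2.1 i x.2.2)
          (Set.Ioo 0 T ×ˢ Set.Ioi 0 ×ˢ Set.Ioi 0) ∧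
        ContinuousOn (fun x : ℝ × ℝ × ℝ => pS x.1 x.2.1 i x.2.2)
          (Set.Ioo 0 T ×ˢ Set.Ioi 0 ×ˢ Set.Ioi 0)) ∧
      (∀ p s : ℝ, p ∈ Set.Ici (0:ℝ) → s ∈ Set.Ici (0:ℝ) → ∀ i ∈ stateS,
        pStar T p i s = p) := by
  obtain ⟨hnn, hCp, hCm, ⟨c1, hc1b⟩, -, -, -⟩ := hA
  have hc10 : 0 ≤ c1 := le_trans (hnn 0 Set.self_mem_Ici).1 (hc1b 0 Set.self_mem_Ici).1
  obtain ⟨hpE, hhpE⟩ : ∃ x : ℝ → ℝ, x = Stmt12Aux.extD hp := ⟨_, rfl⟩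
  obtain ⟨hmE, hhmE⟩ : ∃ x : ℝ → ℝ, x = Stmt12Aux.extD hm := ⟨_, rfl⟩
  obtain ⟨hpE', hhpE'⟩ : ∃ x : ℝ → ℝ, x = Stmt12Aux.extD' hp := ⟨_, rfl⟩
  obtain ⟨hmE', hhmE'⟩ : ∃ x : ℝ → ℝ, x = Stmt12Aux.extD' hm := ⟨_, rfl⟩
  have hcp : Continuous hpE := by rw [hhpE]; exact Stmt12Aux.extD_continuous hCp
  have hcm : Continuous hmE := by rw [hhmE]; exact Stmt12Aux.extD_continuous hCm
  have hcp' : Continuous hpE' := by rw [hhpE']; exact Stmt12Aux.extD'_continuous hCp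
  have hcm' : Continuous hmE' := by rw [hhmE']; exact Stmt12Aux.extD'_continuous hCm
  have hdp : ∀ y, HasDerivAt hpE (hpE' y) y := by
    rw [hhpE, hhpE']; exact Stmt12Aux.extD_hasDerivAt hCp
  have hdm : ∀ y, HasDerivAt hmE (hmE' y) y := by
    rw [hhmE, hhmE']; exact Stmt12Aux.extD_hasDerivAt hCm
  have hpe : ∀ y : ℝ, 0 ≤ y → hpE y = hp y := by
    rw [hhpE]; exact fun y hy => Stmt12Aux.extD_eq hy
  have hme : ∀ y : ℝ, 0 ≤ y → hmE y = hm y := by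
    rw [hhmE]; exact fun y hy => Stmt12Aux.extD_eq hy
  have hbp : ∀ y, 0 ≤ y → |hpE y| ≤ c1 := by
    intro y hy
    rw [hpe y hy, abs_of_nonneg (hnn y hy).1]
    exact (hc1b y hy).1
  have hbm : ∀ y, 0 ≤ y → |hmE y| ≤ c1 := by
    intro y hy
    rw [hme y hy, abs_of_nonneg (hnn y hy).2]
    exact (hc1b y hy).2
  obtain ⟨HH, hHH⟩ : ∃ x : ℝ → ℝ, x = fun y => ∫ v in (0:ℝ)..y, (hpE v + hmE v) := ⟨_, rfl⟩
  have hHHder : ∀ y, HasDerivAt HH (hpE y + hmE y) y := by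
    intro y
    rw [hHH]
    exact intervalIntegral.integral_hasDerivAt_right
      ((hcp.add hcm).intervalIntegrable _ _)
      ((hcp.add hcm).stronglyMeasurableAtFilter _ _)
      (hcp.add hcm).continuousAt
  have hHHc : Continuous HH := continuous_iff_continuousAt.mpr fun y => (hHHder y).continuousAt
  have hEnn : ∀ u : ℝ, 0 ≤ u → ∀ v, u ≤ v → HH u ≤ HH v := by
    intro u hu v huv
    have h1 : IntervalIntegrable (fun v => hpE v + hmE v) volume 0 u :=
      (hcp.add hcm).intervalIntegrable _ _
    have h2 : IntervalIntegrable (fun v => hpE v + hmE v) volume u v :=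
      (hcp.add hcm).intervalIntegrable _ _
    have h3 := intervalIntegral.integral_add_adjacent_intervals h1 h2
    have h4 : 0 ≤ ∫ w in u..v, (hpE w + hmE w) := by
      apply intervalIntegral.integral_nonneg huv
      intro w hw
      have hw0 : (0:ℝ) ≤ w := le_trans hu hw.1
      rw [hpe w hw0, hme w hw0]
      exact add_nonneg (hnn w hw0).1 (hnn w hw0).2
    simp only [hHH]
    rw [← h3]
    linarith
  have hHHnn : ∀ u, 0 ≤ u → 0 ≤ HH u := by
    intro u hu
    have h0 : HH 0 = 0 := by simp [hHH]
    have := hEnn 0 le_rfl u hu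
    linarith
  obtain ⟨aF, bF, hac, hbc, ⟨CX, hCX0, hCXb⟩, hVa, hVb⟩ :=
    Stmt12Aux.exists_volterra T δ c1 hT hδ hc10 HH hpE hmE hHHc hcp hcm hbp hbm hHHnn
  obtain ⟨Pf, hPf⟩ : ∃ x : ℕ → ℝ → ℝ, x = fun i r => if Even i then hmE r else hpE r := ⟨_, rfl⟩
  obtain ⟨Qf, hQf⟩ : ∃ x : ℕ → ℝ → ℝ, x = fun i r => if Even i then hpE r else hmE r := ⟨_, rfl⟩
  obtain ⟨Pf', hPf'⟩ : ∃ x : ℕ → ℝ → ℝ, x = fun i r => if Even i then hmE' r else hpE' r := ⟨_, rfl⟩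
  obtain ⟨Qf', hQf'⟩ : ∃ x : ℕ → ℝ → ℝ, x = fun i r => if Even i then hpE' r else hmE' r := ⟨_, rfl⟩
  have hPc : ∀ i, Continuous (Pf i) := by
    intro i; by_cases h : Even i <;> simp only [hPf, h, if_true, if_false]
    exacts [hcm, hcp]
  have hQc : ∀ i, Continuous (Qf i) := by
    intro i; by_cases h : Even i <;> simp only [hQf, h, if_true, if_false]
    exacts [hcp, hcm]
  have hPc' : ∀ i, Continuous (Pf' i) := by
    intro i; by_cases h : Even i <;> simp only [hPf', h, if_true, if_false]
    exacts [hcm', hcp']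
  have hQc' : ∀ i, Continuous (Qf' i) := by
    intro i; by_cases h : Even i <;> simp only [hQf', h, if_true, if_false]
    exacts [hcp', hcm']
  have hPd : ∀ i r, HasDerivAt (Pf i) (Pf' i r) r := by
    intro i r; by_cases h : Even i <;> simp only [hPf, hPf', h, if_true, if_false]
    exacts [hdm r, hdp r]
  have hQd : ∀ i r, HasDerivAt (Qf i) (Qf' i r) r := by
    intro i r; by_cases h : Even i <;> simp only [hQf, hQf', h, if_true, if_false]
    exacts [hdp r, hdm r]
  have hPb : ∀ i r, 0 ≤ r → |Pf i r| ≤ c1 := by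
    intro i r hr; by_cases h : Even i <;> simp only [hPf, h, if_true, if_false]
    exacts [hbm r hr, hbp r hr]
  have hQb : ∀ i r, 0 ≤ r → |Qf i r| ≤ c1 := by
    intro i r hr; by_cases h : Even i <;> simp only [hQf, h, if_true, if_false]
    exacts [hbp r hr, hbm r hr]
  obtain ⟨Psi, hPsi⟩ : ∃ x : ℕ → ℝ → ℝ → ℝ, x = fun i v r =>
    (1-δ) * Pf i r * aF v + (1+δ) * Qf i r * bF v := ⟨_, rfl⟩
  obtain ⟨Psi', hPsi'⟩ : ∃ x : ℕ → ℝ → ℝ → ℝ, x = fun i v r =>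
    (1-δ) * Pf' i r * aF v + (1+δ) * Qf' i r * bF v := ⟨_, rfl⟩
  obtain ⟨NN, hNN⟩ : ∃ x : ℕ → ℝ → ℝ → ℝ, x = fun i v r => Real.exp (-HH r) * Psi i v r := ⟨_, rfl⟩
  obtain ⟨NR, hNR⟩ : ∃ x : ℕ → ℝ → ℝ → ℝ, x = fun i v r =>
    Real.exp (-HH r) * (Psi' i v r - (hpE r + hmE r) * Psi i v r) := ⟨_, rfl⟩
  have hNc : ∀ i, Continuous fun q : ℝ × ℝ => NN i q.1 q.2 := by
    intro i
    have h1 := hPc i; have h2 := hQc i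
    simp only [hNN, hPsi]; fun_prop
  have hNRc : ∀ i, Continuous fun q : ℝ × ℝ => NR i q.1 q.2 := by
    intro i
    have h1 := hPc i; have h2 := hQc i; have h3 := hPc' i; have h4 := hQc' i
    simp only [hNR, hPsi, hPsi']; fun_prop
  have hNd : ∀ i v r, HasDerivAt (fun r => NN i v r) (NR i v r) r := by
    intro i v r
    have hE : HasDerivAt (fun r => Real.exp (-HH r)) (Real.exp (-HH r) * (-(hpE r + hmE r))) r :=
      (hHHder r).neg.exp
    have hPs : HasDerivAt (fun r => Psi i v r) (Psi' i v r) r := by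
      simp only [hPsi, hPsi']
      exact (((hPd i r).const_mul (1-δ)).mul_const (aF v)).add
        (((hQd i r).const_mul (1+δ)).mul_const (bF v))
    have := hE.mul hPs
    simp only [hNN, hNR]
    refine this.congr_deriv ?_
    ring
  obtain ⟨II, hII⟩ : ∃ x : ℕ → ℝ → ℝ → ℝ, x = fun i t s => ∫ v in t..T, NN i v (v - t + s) := ⟨_, rfl⟩
  obtain ⟨IS, hIS⟩ : ∃ x : ℕ → ℝ → ℝ → ℝ, x = fun i t s => ∫ v in t..T, NR i v (v - t + s) := ⟨_, rfl⟩
  obtain ⟨w, hw⟩ : ∃ x : ℕ → ℝ → ℝ → ℝ, x = fun i t s =>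
    Real.exp (HH s) * (Real.exp (-HH (T - t + s)) + II i t s) := ⟨_, rfl⟩
  obtain ⟨wT, hwT⟩ : ∃ x : ℕ → ℝ → ℝ → ℝ, x = fun i t s => Real.exp (HH s) *
    ((hpE (T-t+s) + hmE (T-t+s)) * Real.exp (-HH (T-t+s)) - NN i t s - IS i t s) := ⟨_, rfl⟩
  obtain ⟨wS, hwS⟩ : ∃ x : ℕ → ℝ → ℝ → ℝ, x = fun i t s => (hpE s + hmE s) * w i t s +
    Real.exp (HH s) * (-((hpE (T-t+s) + hmE (T-t+s)) * Real.exp (-HH (T-t+s))) + IS i t s) := ⟨_, rfl⟩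
  -- s-derivative of II
  have hIIs : ∀ i t s, HasDerivAt (fun s' => II i t s') (IS i t s) s := by
    intro i t s
    have hbase := Stmt12Aux.hasDerivAt_integral_param (hNc i) (hNRc i)
      (fun v r => hNd i v r) t T (s - t)
    have hcomp := hbase.comp s ((hasDerivAt_id s).sub_const t)
    simp only [id_eq] at hcomp
    have hfun : ((fun η => ∫ v in t..T, NN i v (v + η)) ∘ fun s' => s' - t)
        = fun s' => II i t s' := by
      funext s'
      simp only [Function.comp, hII]
      apply intervalIntegral.integral_congr
      intro v _
      show NN i v (v + (s' - t)) = NN i v (v - t + s')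
      rw [show v + (s' - t) = v - t + s' from by ring]
    have hval : (∫ v in t..T, NR i v (v + (s - t))) * 1 = IS i t s := by
      rw [mul_one]
      simp only [hIS]
      apply intervalIntegral.integral_congr
      intro v _
      show NR i v (v + (s - t)) = NR i v (v - t + s)
      rw [show v + (s - t) = v - t + s from by ring]
    rw [hfun, hval] at hcomp
    exact hcomp
  -- t-derivative of II
  have hIIt : ∀ i s t, HasDerivAt (fun t' => II i t' s) (-NN i t s - IS i t s) t := by
    intro i s t
    have hgc : Continuous fun q : ℝ × ℝ => NN i q.2 (q.2 - q.1 + s) :=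
      (hNc i).comp (continuous_snd.prodMk
        ((continuous_snd.sub continuous_fst).add continuous_const))
    have hint : ∀ a b : ℝ, ∀ t', IntervalIntegrable (fun v => NN i v (v - t' + s)) volume a b := by
      intro a b t'
      exact ((hNc i).comp (continuous_id.prodMk
        ((continuous_id.sub continuous_const).add continuous_const))).intervalIntegrable _ _
    have hsplit : (fun t' => II i t' s) = fun t' =>
        (∫ v in t'..t, NN i v (v - t' + s)) + ∫ v in t..T, NN i v (v - t' + s) := by
      funext t'
      simp only [hII]
      rw [intervalIntegral.integral_add_adjacent_intervals (hint t' t t') (hint t T t')]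
    rw [hsplit]
    have hd1 := Stmt12Aux.hasDerivAt_integral_endpoint hgc t
    simp only [] at hd1
    have hd2base := Stmt12Aux.hasDerivAt_integral_param (hNc i) (hNRc i)
      (fun v r => hNd i v r) t T (s - t)
    have hd2 := hd2base.comp t ((hasDerivAt_id t).const_sub s)
    have hfun2 : ((fun η => ∫ v in t..T, NN i v (v + η)) ∘ fun t' => s - t')
        = fun t' => ∫ v in t..T, NN i v (v - t' + s) := by
      funext t'
      simp only [Function.comp]
      apply intervalIntegral.integral_congr
      intro v _
      show NN i v (v + (s - t')) = NN i v (v - t' + s)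
      rw [show v + (s - t') = v - t' + s from by ring]
    rw [hfun2] at hd2
    have hsum := hd1.add hd2
    refine hsum.congr_deriv ?_
    have he1 : t - t + s = s := by ring
    rw [he1]
    have hISeq : IS i t s = ∫ v in t..T, NR i v (v + (s - t)) := by
      simp only [hIS]
      apply intervalIntegral.integral_congr
      intro v _
      show NR i v (v - t + s) = NR i v (v + (s - t))
      rw [show v - t + s = v + (s - t) from by ring]
    rw [hISeq]
    ring
  -- joint continuity of the parametric integrals
  have hparC : ∀ (M : ℕ → ℝ → ℝ → ℝ), (∀ i, Continuous fun q : ℝ × ℝ => M i q.1 q.2) →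
      ∀ i, Continuous fun q : ℝ × ℝ => ∫ v in q.1..T, M i v (v - q.1 + q.2) := by
    intro M hM i
    have hu : Continuous fun z : (ℝ × ℝ) × ℝ => M i z.2 (z.2 - z.1.1 + z.1.2) :=
      (hM i).comp (continuous_snd.prodMk
        ((continuous_snd.sub (continuous_fst.fst)).add (continuous_fst.snd)))
    have h1 : Continuous fun q : ℝ × ℝ => ∫ v in T..q.1, M i v (v - q.1 + q.2) :=
      intervalIntegral.continuous_parametric_intervalIntegral_of_continuous
        (f := fun (q : ℝ × ℝ) v => M i v (v - q.1 + q.2))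
        (by rw [Function.uncurry_def]; exact hu) continuous_fst
    have h2 : (fun q : ℝ × ℝ => ∫ v in q.1..T, M i v (v - q.1 + q.2))
        = fun q => -∫ v in T..q.1, M i v (v - q.1 + q.2) := by
      funext q; rw [intervalIntegral.integral_symm]
    rw [h2]; exact h1.neg
  have hIIc : ∀ i, Continuous fun q : ℝ × ℝ => II i q.1 q.2 := by
    intro i; simp only [hII]; exact hparC NN hNc i
  have hISc : ∀ i, Continuous fun q : ℝ × ℝ => IS i q.1 q.2 := by
    intro i; simp only [hIS]; exact hparC NR hNRc i
  have hlin : Continuous fun q : ℝ × ℝ => T - q.1 + q.2 :=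
    (continuous_const.sub continuous_fst).add continuous_snd
  have e1c : Continuous fun q : ℝ × ℝ => Real.exp (HH q.2) :=
    Real.continuous_exp.comp (hHHc.comp continuous_snd)
  have e2c : Continuous fun q : ℝ × ℝ => Real.exp (-HH (T - q.1 + q.2)) :=
    Real.continuous_exp.comp ((hHHc.comp hlin).neg)
  have e3c : Continuous fun q : ℝ × ℝ => hpE (T - q.1 + q.2) + hmE (T - q.1 + q.2) :=
    (hcp.comp hlin).add (hcm.comp hlin)
  have hwc : ∀ i, Continuous fun q : ℝ × ℝ => w i q.1 q.2 := by
    intro i; simp only [hw]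
    exact e1c.mul (e2c.add (hIIc i))
  have hwTc : ∀ i, Continuous fun q : ℝ × ℝ => wT i q.1 q.2 := by
    intro i; simp only [hwT]
    exact e1c.mul (((e3c.mul e2c).sub (hNc i)).sub (hISc i))
  have hwSc : ∀ i, Continuous fun q : ℝ × ℝ => wS i q.1 q.2 := by
    intro i; simp only [hwS]
    exact (((hcp.comp continuous_snd).add (hcm.comp continuous_snd)).mul
      (by simpa only [hw] using hwc i)).add (e1c.mul (((e3c.mul e2c).neg).add (hISc i)))
  -- t-derivative of w
  have hwt : ∀ i s t, HasDerivAt (fun t' => w i t' s) (wT i t s) t := by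
    intro i s t
    have h1 : HasDerivAt (fun t' : ℝ => T - t' + s) (-1) t := by
      simpa using ((hasDerivAt_id t).const_sub T).add_const s
    have h2 : HasDerivAt (fun t' => Real.exp (-HH (T - t' + s)))
        ((hpE (T-t+s) + hmE (T-t+s)) * Real.exp (-HH (T-t+s))) t := by
      have h := (((hHHder (T - t + s)).comp t h1).neg).exp
      refine h.congr_deriv ?_
      simp only [Function.comp_apply, Pi.neg_apply]
      ring
    have h3 := (h2.add (hIIt i s t)).const_mul (Real.exp (HH s))
    have hfun : (fun t' => w i t' s)
        = fun t' => Real.exp (HH s) * (Real.exp (-HH (T - t' + s)) + II i t' s) := by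
      funext t'; simp only [hw]
    rw [hfun]
    refine h3.congr_deriv ?_
    simp only [hwT]
    ring
  -- s-derivative of w
  have hwsd : ∀ i t s, HasDerivAt (fun s' => w i t s') (wS i t s) s := by
    intro i t s
    have h1 : HasDerivAt (fun s' : ℝ => T - t + s') 1 s := by
      simpa using (hasDerivAt_id s).const_add (T - t)
    have h2 : HasDerivAt (fun s' => Real.exp (-HH (T - t + s')))
        (-((hpE (T-t+s) + hmE (T-t+s)) * Real.exp (-HH (T-t+s)))) s := by
      have h := (((hHHder (T - t + s)).comp s h1).neg).exp
      refine h.congr_deriv ?_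
      simp only [Function.comp_apply, Pi.neg_apply]
      ring
    have h3 : HasDerivAt (fun s' => Real.exp (HH s')) ((hpE s + hmE s) * Real.exp (HH s)) s := by
      have h := (hHHder s).exp
      convert h using 1
      ring
    have h4 := h3.mul (h2.add (hIIs i t s))
    have hfun : (fun s' => w i t s')
        = fun s' => Real.exp (HH s') * (Real.exp (-HH (T - t + s')) + II i t s') := by
      funext s'; simp only [hw]
    rw [hfun]
    refine h4.congr_deriv ?_
    simp only [hwS, hw, Pi.add_apply]
    ring
  -- boundary values of w at s = 0
  have hHH0 : HH 0 = 0 := by rw [hHH]; simp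
  have hw0 : ∀ j, ∀ t ∈ Set.Icc (0:ℝ) T, w j t 0 = if Even j then bF t else aF t := by
    intro j t ht
    by_cases hj : Even j
    · rw [if_pos hj, hVb t ht]
      simp only [hw, hII, hNN, hPsi, hPf, hQf, if_pos hj, hHH0, Real.exp_zero, one_mul, add_zero]
    · rw [if_neg hj, hVa t ht]
      simp only [hw, hII, hNN, hPsi, hPf, hQf, if_neg hj, hHH0, Real.exp_zero, one_mul, add_zero]
  -- key algebraic identity
  have hkey : ∀ i t s, wT i t s + wS i t s = (hpE s + hmE s) * w i t s - Psi i t s := by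
    intro i t s
    have hexp : Real.exp (HH s) * Real.exp (-HH s) = 1 := by
      rw [← Real.exp_add]; simp
    simp only [hwT, hwS, hNN]
    linear_combination (-(Psi i t s)) * hexp
  -- conclude
  refine ⟨fun t p i s => p * w i t s, fun t p i s => p * wT i t s,
    fun t p i s => p * wS i t s, ⟨?_, ?_⟩, ?_, ?_, ?_⟩
  · intro i _
    apply Continuous.continuousOn
    exact (continuous_fst.comp continuous_snd).mul
      ((hwc i).comp (continuous_fst.prodMk (continuous_snd.comp continuous_snd)))
  · refine ⟨1 + T * (2*(1+δ)*c1*CX), fun t p s ht hP hs i _ => ?_⟩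
    have hs0 : (0:ℝ) ≤ s := hs
    have hp0 : (0:ℝ) ≤ p := hP
    have ht0 : (0:ℝ) ≤ t := ht.1
    have htT : t ≤ T := ht.2
    have h1 : Real.exp (HH s) * Real.exp (-HH (T - t + s)) ≤ 1 := by
      rw [← Real.exp_add, Real.exp_le_one_iff]
      have := hEnn s hs0 (T - t + s) (by linarith)
      linarith
    have h1' : (0:ℝ) ≤ Real.exp (HH s) * Real.exp (-HH (T - t + s)) := by positivity
    have h2 : |Real.exp (HH s) * II i t s| ≤ T * (2*(1+δ)*c1*CX) := by
      simp only [hII]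
      rw [← intervalIntegral.integral_const_mul]
      have hb : ∀ v ∈ Set.uIoc t T, ‖Real.exp (HH s) * NN i v (v - t + s)‖ ≤ 2*(1+δ)*c1*CX := by
        intro v hv
        rw [Set.uIoc_of_le htT] at hv
        have hv0 : (0:ℝ) ≤ v := le_trans ht0 hv.1.le
        have hvt : (0:ℝ) ≤ v - t := by linarith [hv.1.le]
        have hr0 : s ≤ v - t + s := by linarith
        have hr0' : (0:ℝ) ≤ v - t + s := by linarith
        have hmono := hEnn s hs0 (v - t + s) hr0
        have hE1 : Real.exp (HH s) * Real.exp (-HH (v - t + s)) ≤ 1 := by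
          rw [← Real.exp_add, Real.exp_le_one_iff]; linarith
        have hE0 : (0:ℝ) ≤ Real.exp (HH s) * Real.exp (-HH (v - t + s)) := by positivity
        have hav : |aF v| ≤ CX := (hCXb v ⟨hv0, hv.2⟩).1
        have hbv : |bF v| ≤ CX := (hCXb v ⟨hv0, hv.2⟩).2
        have habs : |1 - δ| ≤ 1 + δ := by rw [abs_le]; constructor <;> linarith
        have hPsib : |Psi i v (v - t + s)| ≤ 2*(1+δ)*c1*CX := by
          simp only [hPsi]
          have t1 : |(1-δ) * Pf i (v-t+s) * aF v| ≤ (1+δ)*c1*CX := by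
            rw [abs_mul, abs_mul]
            exact mul_le_mul (mul_le_mul habs (hPb i _ hr0') (abs_nonneg _)
              (by linarith)) hav (abs_nonneg _) (by positivity)
          have t2 : |(1+δ) * Qf i (v-t+s) * bF v| ≤ (1+δ)*c1*CX := by
            rw [abs_mul, abs_mul, abs_of_nonneg (by linarith : (0:ℝ) ≤ 1+δ)]
            exact mul_le_mul (mul_le_mul le_rfl (hQb i _ hr0') (abs_nonneg _)
              (by linarith)) hbv (abs_nonneg _) (by positivity)
          calc |(1-δ) * Pf i (v-t+s) * aF v + (1+δ) * Qf i (v-t+s) * bF v|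
              ≤ |(1-δ) * Pf i (v-t+s) * aF v| + |(1+δ) * Qf i (v-t+s) * bF v| := abs_add_le _ _
            _ ≤ (1+δ)*c1*CX + (1+δ)*c1*CX := add_le_add t1 t2
            _ = 2*(1+δ)*c1*CX := by ring
        rw [Real.norm_eq_abs]
        simp only [hNN]
        calc |Real.exp (HH s) * (Real.exp (-HH (v-t+s)) * Psi i v (v-t+s))|
            = (Real.exp (HH s) * Real.exp (-HH (v-t+s))) * |Psi i v (v-t+s)| := by
              rw [abs_mul, abs_mul, Real.abs_exp, Real.abs_exp]; ring
          _ ≤ 1 * (2*(1+δ)*c1*CX) := mul_le_mul hE1 hPsib (abs_nonneg _) zero_le_one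
          _ = 2*(1+δ)*c1*CX := one_mul _
      have hni := intervalIntegral.norm_integral_le_of_norm_le_const hb
      rw [Real.norm_eq_abs] at hni
      refine le_trans hni ?_
      rw [show |T - t| = T - t from abs_of_nonneg (by linarith)]
      nlinarith [mul_nonneg (mul_nonneg (mul_nonneg (by linarith : (0:ℝ) ≤ 2*(1+δ)) hc10) hCX0) ht0]
    have hwb : |w i t s| ≤ 1 + T * (2*(1+δ)*c1*CX) := by
      simp only [hw]
      calc |Real.exp (HH s) * (Real.exp (-HH (T-t+s)) + II i t s)|
          = |Real.exp (HH s) * Real.exp (-HH (T-t+s)) + Real.exp (HH s) * II i t s| := by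
            rw [mul_add]
        _ ≤ |Real.exp (HH s) * Real.exp (-HH (T-t+s))| + |Real.exp (HH s) * II i t s| :=
            abs_add_le _ _
        _ ≤ 1 + T * (2*(1+δ)*c1*CX) := add_le_add (by rw [abs_of_nonneg h1']; exact h1) h2
    rw [div_le_iff₀ (by linarith : (0:ℝ) < 1 + p), abs_mul, abs_of_nonneg hp0]
    nlinarith [hwb, abs_nonneg (w i t s)]
  · intro i hi t p s htI hpI hsI
    have hIcc : t ∈ Set.Icc (0:ℝ) T := ⟨htI.1.le, htI.2.le⟩
    have hs0 : (0:ℝ) < s := hsI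
    refine ⟨(hwt i s t).const_mul p, (hwsd i t s).const_mul p, ?_⟩
    have hk := hkey i t s
    have hpes : hpE s = hp s := hpe s hs0.le
    have hmes : hmE s = hm s := hme s hs0.le
    have hw1 : w 1 t 0 = aF t := by
      rw [hw0 1 t hIcc, if_neg (by decide : ¬ Even 1)]
    have hw2 : w 2 t 0 = bF t := by
      rw [hw0 2 t hIcc, if_pos (by decide : Even 2)]
    have hw3 : w 3 t 0 = aF t := by
      rw [hw0 3 t hIcc, if_neg (by decide : ¬ Even 3)]
    have hw4 : w 4 t 0 = bF t := by
      rw [hw0 4 t hIcc, if_pos (by decide : Even 4)]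
    fin_cases hi
    · beta_reduce
      rw [show conjS 1 = {3, 4} from by decide, Finset.sum_pair (by norm_num : (3:ℕ) ≠ 4)]
      rw [show hijf hp hm 1 3 = hp from by unfold hijf; rw [if_pos (by decide : Even (1+3))],
        show hijf hp hm 1 4 = hm from by unfold hijf; rw [if_neg (by decide : ¬ Even (1+4))],
        show alphaR 3 = -1 from by norm_num [alphaR],
        show alphaR 4 = 1 from by norm_num [alphaR], hw3, hw4]
      have hP1 : Pf 1 s = hpE s := by rw [hPf]; exact if_neg (by decide : ¬ Even 1)
      have hQ1 : Qf 1 s = hmE s := by rw [hQf]; exact if_neg (by decide : ¬ Even 1)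
      simp only [hPsi, hP1, hQ1, hpes, hmes] at hk
      linear_combination p * hk
    · beta_reduce
      rw [show conjS 2 = {3, 4} from by decide, Finset.sum_pair (by norm_num : (3:ℕ) ≠ 4)]
      rw [show hijf hp hm 2 3 = hm from by unfold hijf; rw [if_neg (by decide : ¬ Even (2+3))],
        show hijf hp hm 2 4 = hp from by unfold hijf; rw [if_pos (by decide : Even (2+4))],
        show alphaR 3 = -1 from by norm_num [alphaR],
        show alphaR 4 = 1 from by norm_num [alphaR], hw3, hw4]
      have hP1 : Pf 2 s = hmE s := by rw [hPf]; exact if_pos (by decide : Even 2)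
      have hQ1 : Qf 2 s = hpE s := by rw [hQf]; exact if_pos (by decide : Even 2)
      simp only [hPsi, hP1, hQ1, hpes, hmes] at hk
      linear_combination p * hk
    · beta_reduce
      rw [show conjS 3 = {1, 2} from by decide, Finset.sum_pair (by norm_num : (1:ℕ) ≠ 2)]
      rw [show hijf hp hm 3 1 = hp from by unfold hijf; rw [if_pos (by decide : Even (3+1))],
        show hijf hp hm 3 2 = hm from by unfold hijf; rw [if_neg (by decide : ¬ Even (3+2))],
        show alphaR 1 = -1 from by norm_num [alphaR],
        show alphaR 2 = 1 from by norm_num [alphaR], hw1, hw2]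
      have hP1 : Pf 3 s = hpE s := by rw [hPf]; exact if_neg (by decide : ¬ Even 3)
      have hQ1 : Qf 3 s = hmE s := by rw [hQf]; exact if_neg (by decide : ¬ Even 3)
      simp only [hPsi, hP1, hQ1, hpes, hmes] at hk
      linear_combination p * hk
    · beta_reduce
      rw [show conjS 4 = {1, 2} from by decide, Finset.sum_pair (by norm_num : (1:ℕ) ≠ 2)]
      rw [show hijf hp hm 4 1 = hm from by unfold hijf; rw [if_neg (by decide : ¬ Even (4+1))],
        show hijf hp hm 4 2 = hp from by unfold hijf; rw [if_pos (by decide : Even (4+2))],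
        show alphaR 1 = -1 from by norm_num [alphaR],
        show alphaR 2 = 1 from by norm_num [alphaR], hw1, hw2]
      have hP1 : Pf 4 s = hmE s := by rw [hPf]; exact if_pos (by decide : Even 4)
      have hQ1 : Qf 4 s = hpE s := by rw [hQf]; exact if_pos (by decide : Even 4)
      simp only [hPsi, hP1, hQ1, hpes, hmes] at hk
      linear_combination p * hk
  · intro i _
    constructor
    · apply Continuous.continuousOn
      exact (continuous_fst.comp continuous_snd).mul
        ((hwTc i).comp (continuous_fst.prodMk (continuous_snd.comp continuous_snd)))
    · apply Continuous.continuousOn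
      exact (continuous_fst.comp continuous_snd).mul
        ((hwSc i).comp (continuous_fst.prodMk (continuous_snd.comp continuous_snd)))
  · intro p s hP hs i _
    have hwT1 : w i T s = 1 := by
      simp only [hw, hII]
      rw [show T - T + s = s from by ring, intervalIntegral.integral_same, add_zero,
        ← Real.exp_add]
      simp
    show p * w i T s = p
    rw [hwT1, mul_one]
end
end

section
/- Suppose π ∈ V has continuous partial derivatives in t and s on D° and solves ∂π/∂t + ∂π/∂s + Σ_{j≢i} h_{ij}(s)(π(t,p(1+δα(j)),j,0) − π(t,p,i,s)) = 0 with π(T,p,i,s) = p, and suppose u ∈ V possesses a continuous directional derivative D_{t,s}u on D° and solves D_{t,s}u(t,p,i,s) + Σ_{j≢i} h_{ij}(s)(u(t,p(1+δα(j)),j,0) − u(t,p,i,s)) + Σ_{j≢i} max{m_j(t,p,i,s),0} = 0 with u(T,p,i,s) = 0. Define J⁰(t,p,i,s,x,y) := x + y·π(t,p,i,s) + u(t,p,i,s) for (t,p,i,s) ∈ D, x ∈ ℝ, y ∈ ℤ. Then for every (t,p,i,s) ∈ D° and all x ∈ ℝ, y ∈ ℤ: max over l = (l⁺,l⁻) ∈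 {0,1}² of 𝒜^l J⁰(t,p,i,s,x,y) equals 0, the maximum is attained at the control l* with l*^{ᾱ(j)} = 1 if m_j(t,p,i,s) > 0 and l*^{ᾱ(j)} = 0 otherwise (for each j ≢ i), and J⁰(T,p,i,s,x,y) = x + y·p. -/
open MeasureTheory Filter Set Finset intervalIntegral

noncomputable section

/-- `λ_{ᾱ(j)}` : `λ₊` if `j` is even, `λ₋` if `j` is odd. -/
def lamBar (lp lm : ℝ → ℝ) (j : ℕ) : ℝ → ℝ := if Even j then lp else lm

/-- `ϑ_{ᾱ(j)}` : `ϑ₊` if `j` is even, `ϑ₋` if `j` is odd. -/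
def thBar (tp tm : ℕ → ℝ) (j : ℕ) : ℕ → ℝ := if Even j then tp else tm

/-- `α(j) = (−1)^j` as an integer. -/
def alphaZ (j : ℕ) : ℤ := (-1 : ℤ) ^ j

/-- The control space `{0,1} × {0,1}` (components `(l⁺, l⁻)`). -/
def Lset : Set (ℤ × ℤ) := ({0, 1} : Set ℤ) ×ˢ ({0, 1} : Set ℤ)

/-- `l^{ᾱ(j)}` : the `+`–component if `j` is even, the `−`–component if `j` is odd. -/
def lcomp (l : ℤ × ℤ) (j : ℕ) : ℤ := if Even j then l.1 else l.2

/-- `m_j(t,p,i,s)`. -/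
def mjf (δ ε : ℝ) (K : ℕ) (hp hm lp lm : ℝ → ℝ) (tp tm : ℕ → ℝ)
    (π : ℝ → ℝ → ℕ → ℝ → ℝ) (i j : ℕ) (t p s : ℝ) : ℝ :=
  lamBar lp lm j s * (∑ k ∈ Finset.range (K + 1), (k : ℝ) * thBar tp tm j k) *
      (alphaR j * p - alphaR j * π t p i s + δ * p - ε) +
    hijf hp hm i j s * (K : ℝ) *
      (alphaR j * p - alphaR j * π t (p * (1 + δ * alphaR j)) j 0 + δ * p - ε)

/-- The operator `𝒜^l Ĵ` at a point of `D° × ℝ × ℤ`, where `DtsVal` stands for the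
directional derivative `D_{t,s}Ĵ` at that point. -/
def Aop (δ ε : ℝ) (K : ℕ) (hp hm lp lm : ℝ → ℝ) (tp tm : ℕ → ℝ)
    (J : ℝ → ℝ → ℕ → ℝ → ℝ → ℤ → ℝ) (DtsVal : ℝ)
    (t p : ℝ) (i : ℕ) (s x : ℝ) (y : ℤ) (l : ℤ × ℤ) : ℝ :=
  DtsVal + ∑ j ∈ conjS i,
    (lamBar lp lm j s * ∑ k ∈ Finset.range (K + 1), thBar tp tm j k *
        (J t p i s
            (x + alphaR j * (lcomp l j : ℝ) * (k : ℝ) * (p * (1 + δ * alphaR j) - alphaR j * ε))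
            (y - alphaZ j * lcomp l j * (k : ℤ)) -
          J t p i s x y) +
      hijf hp hm i j s *
        (J t (p * (1 + δ * alphaR j)) j 0
            (x + alphaR j * (lcomp l j : ℝ) * (K : ℝ) * (p * (1 + δ * alphaR j) - alphaR j * ε))
            (y - alphaZ j * lcomp l j * (K : ℤ)) -
          J t p i s x y))

/-- `J⁰(t,p,i,s,x,y) = x + y·π(t,p,i,s) + u(t,p,i,s)`. -/
def J0 (π u : ℝ → ℝ → ℕ → ℝ → ℝ) (t p : ℝ) (i : ℕ) (s x : ℝ) (y : ℤ) : ℝ :=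
  x + (y : ℝ) * π t p i s + u t p i s


section Helpers

open Topology

private lemma dirDeriv' (T : ℝ) (f fT : ℝ → ℝ → ℝ) (fS : ℝ) (t s : ℝ)
    (ht : t ∈ Set.Ioo 0 T) (hs : s ∈ Set.Ioi (0:ℝ))
    (hfT : ∀ a b, a ∈ Set.Ioo 0 T → b ∈ Set.Ioi (0:ℝ) →
      HasDerivAt (fun t' => f t' b) (fT a b) a)
    (hfS : HasDerivAt (fun s' => f t s') fS s)
    (hTc : ContinuousAt (fun q : ℝ × ℝ => fT q.1 q.2) (t, s)) :
    HasDerivAt (fun e => f (t + e) (s + e)) (fT t s + fS) 0 := by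
  rw [hasDerivAt_iff_tendsto_slope]
  have hB : Tendsto (fun e => (f t (s + e) - f t s) / e) (𝓝[≠] (0:ℝ)) (𝓝 fS) := by
    have h1 : HasDerivAt (fun e : ℝ => s + e) 1 0 := by
      simpa using (hasDerivAt_id (0:ℝ)).const_add s
    have hfS' : HasDerivAt (fun s' => f t s') fS ((fun e : ℝ => s + e) 0) := by
      simpa using hfS
    have h2 : HasDerivAt (fun e : ℝ => f t (s + e)) fS 0 := by
      simpa [Function.comp_def] using hfS'.comp 0 h1
    have h3 := hasDerivAt_iff_tendsto_slope.1 h2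
    refine h3.congr ?_
    intro e
    simp [slope_def_field]
  have hA : Tendsto (fun e => (f (t + e) (s + e) - f t (s + e)) / e) (𝓝[≠] (0:ℝ))
      (𝓝 (fT t s)) := by
    rw [Metric.tendsto_nhdsWithin_nhds]
    intro η hη
    rcases Metric.continuousAt_iff.1 hTc η hη with ⟨r1, hr1, hball⟩
    have hopen : IsOpen (Set.Ioo (0:ℝ) T ×ˢ Set.Ioi (0:ℝ)) := isOpen_Ioo.prod isOpen_Ioi
    rcases Metric.isOpen_iff.1 hopen (t, s) ⟨ht, hs⟩ with ⟨r2, hr2, hsub⟩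
    refine ⟨min r1 r2, lt_min hr1 hr2, ?_⟩
    intro e he hde
    have he0 : e ≠ 0 := he
    have habs : |e| < min r1 r2 := by simpa [Real.dist_eq] using hde
    have hmem : ∀ τ : ℝ, |τ - t| ≤ |e| →
        dist ((τ, s + e) : ℝ × ℝ) (t, s) < min r1 r2 := by
      intro τ hτ
      have hd : dist ((τ, s + e) : ℝ × ℝ) (t, s) = max |τ - t| |e| := by
        simp [Prod.dist_eq, Real.dist_eq]
      rw [hd]
      exact max_lt (lt_of_le_of_lt hτ habs) habs
    have hU : ∀ τ : ℝ, |τ - t| ≤ |e| → (τ ∈ Set.Ioo 0 T ∧ s + e ∈ Set.Ioi (0:ℝ)) := by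
      intro τ hτ
      have := hsub (lt_of_lt_of_le (hmem τ hτ) (min_le_right _ _))
      exact ⟨this.1, this.2⟩
    have hder : ∀ τ : ℝ, |τ - t| ≤ |e| →
        HasDerivAt (fun τ' => f τ' (s + e)) (fT τ (s + e)) τ := by
      intro τ hτ
      exact hfT τ (s + e) (hU τ hτ).1 (hU τ hτ).2
    obtain ⟨c, hcabs, hceq⟩ : ∃ c : ℝ, |c - t| ≤ |e| ∧
        fT c (s + e) = (f (t + e) (s + e) - f t (s + e)) / e := by
      rcases lt_or_gt_of_ne he0 with hneg | hpos
      · have hab : t + e < t := by linarith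
        have habse : |e| = -e := abs_of_neg hneg
        have hIccmem : ∀ τ ∈ Set.Icc (t + e) t, |τ - t| ≤ |e| := by
          intro τ hτ
          rw [habse, abs_le]
          constructor <;> [linarith [hτ.1]; linarith [hτ.2]]
        obtain ⟨c, hc, hceq⟩ := exists_hasDerivAt_eq_slope (fun τ => f τ (s + e))
          (fun τ => fT τ (s + e)) hab
          (fun τ hτ => (hder τ (hIccmem τ hτ)).continuousAt.continuousWithinAt)
          (fun τ hτ => hder τ (hIccmem τ (Set.mem_Icc_of_Ioo hτ)))
        refine ⟨c, hIccmem c (Set.mem_Icc_of_Ioo hc), ?_⟩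
        have h2 : t - (t + e) = -e := by ring
        rw [hceq, h2, div_neg, ← neg_div, neg_sub]
      · have hab : t < t + e := by linarith
        have habse : |e| = e := abs_of_pos hpos
        have hIccmem : ∀ τ ∈ Set.Icc t (t + e), |τ - t| ≤ |e| := by
          intro τ hτ
          rw [habse, abs_le]
          constructor <;> [linarith [hτ.1]; linarith [hτ.2]]
        obtain ⟨c, hc, hceq⟩ := exists_hasDerivAt_eq_slope (fun τ => f τ (s + e))
          (fun τ => fT τ (s + e)) hab
          (fun τ hτ => (hder τ (hIccmem τ hτ)).continuousAt.continuousWithinAt)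
          (fun τ hτ => hder τ (hIccmem τ (Set.mem_Icc_of_Ioo hτ)))
        refine ⟨c, hIccmem c (Set.mem_Icc_of_Ioo hc), ?_⟩
        rw [hceq]
        have h2 : t + e - t = e := by ring
        rw [h2]
    rw [Real.dist_eq, ← hceq]
    have := hball (lt_of_lt_of_le (hmem c hcabs) (min_le_left _ _))
    simpa [Real.dist_eq] using this
  refine Tendsto.congr' ?_ (hA.add hB)
  filter_upwards [self_mem_nhdsWithin] with e he
  have he0 : e ≠ 0 := he
  simp only [slope_def_field, add_zero, sub_zero]
  field_simp
  ring

private lemma exists_lstar (i : ℕ) (hi : i ∈ stateS) (m : ℕ → ℝ) :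
    ∃ l ∈ Lset, ∀ j ∈ conjS i, lcomp l j = if 0 < m j then 1 else 0 := by
  have hLmem : ∀ a b : ℤ, (a = 0 ∨ a = 1) → (b = 0 ∨ b = 1) → ((a, b) ∈ Lset) := by
    intro a b ha hb
    simp only [Lset, Set.mem_prod, Set.mem_insert_iff, Set.mem_singleton_iff]
    exact ⟨ha, hb⟩
  have key : ∀ jE jO : ℕ, Even jE → ¬ Even jO → conjS i = {jO, jE} →
      ∃ l ∈ Lset, ∀ j ∈ conjS i, lcomp l j = if 0 < m j then 1 else 0 := by
    intro jE jO hE hO hc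
    refine ⟨(if 0 < m jE then 1 else 0, if 0 < m jO then 1 else 0),
      hLmem _ _ (by split_ifs <;> simp) (by split_ifs <;> simp), ?_⟩
    intro j hj
    rw [hc] at hj
    rcases Finset.mem_insert.1 hj with rfl | hj
    · simp [lcomp, hO]
    · rw [Finset.mem_singleton.1 hj]
      simp [lcomp, hE]
  have hi' : i = 1 ∨ i = 2 ∨ i = 3 ∨ i = 4 := by
    have : i ∈ ({1, 2, 3, 4} : Finset ℕ) := hi
    simpa using this
  rcases hi' with rfl | rfl | rfl | rfl
  · exact key 4 3 (by decide) (by decide) (by decide)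
  · exact key 4 3 (by decide) (by decide) (by decide)
  · exact key 2 1 (by decide) (by decide) (by decide)
  · exact key 2 1 (by decide) (by decide) (by decide)

end Helpers

/-- If `π ∈ V` solves the linear pde with terminal condition `π(T,p,i,s) = p`, and
`u ∈ V` solves `D_{t,s}u + Σ_{j≢i} h_{ij}(s)(u(t,p(1+δα(j)),j,0) − u) + Σ_{j≢i} max{m_j,0} = 0`
with `u(T,·) = 0`, then for `J⁰ = x + yπ + u` : at every point of `D°` (any `x ∈ ℝ`, `y ∈ ℤ`)
the directional derivative of `J⁰` exists, `max_{l ∈ {0,1}²} 𝒜^l J⁰ = 0` with the maximum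
attained at `l*` given by `l*^{ᾱ(j)} = 1_{m_j > 0}`, and `J⁰(T,p,i,s,x,y) = x + y p`. -/
theorem stmt14 (T δ ε : ℝ) (K : ℕ) (hT : 0 < T) (hδ : 0 < δ) (hε : 0 < ε)
    (hp hm : ℝ → ℝ) (hA : hAssumptions hp hm)
    (lp lm : ℝ → ℝ)
    (hlnn : ∀ y ∈ Set.Ici (0:ℝ), 0 ≤ lp y ∧ 0 ≤ lm y)
    (hlcont : ContinuousOn lp (Set.Ici 0) ∧ ContinuousOn lm (Set.Ici 0))
    (hc2 : ∃ c2 : ℝ, ∀ y ∈ Set.Ici (0:ℝ), lp y ≤ c2 ∧ lm y ≤ c2)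
    (tp tm : ℕ → ℝ)
    (htnn : ∀ k : ℕ, 0 ≤ tp k ∧ 0 ≤ tm k)
    (htsum : (∑ k ∈ Finset.range (K + 1), tp k) = 1 ∧
             (∑ k ∈ Finset.range (K + 1), tm k) = 1)
    (π pT pS : ℝ → ℝ → ℕ → ℝ → ℝ) (hπ : memV T π)
    (hπderiv : ∀ i ∈ stateS, ∀ t p s : ℝ,
      t ∈ Set.Ioo (0:ℝ) T → p ∈ Set.Ioi (0:ℝ) → s ∈ Set.Ioi (0:ℝ) →
        HasDerivAt (fun t' => π t' p i s) (pT t p i s) t ∧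
        HasDerivAt (fun s' => π t p i s') (pS t p i s) s)
    (hπcont : ∀ i ∈ stateS,
      ContinuousOn (fun x : ℝ × ℝ × ℝ => pT x.1 x.2.1 i x.2.2)
        (Set.Ioo 0 T ×ˢ Set.Ioi 0 ×ˢ Set.Ioi 0) ∧
      ContinuousOn (fun x : ℝ × ℝ × ℝ => pS x.1 x.2.1 i x.2.2)
        (Set.Ioo 0 T ×ˢ Set.Ioi 0 ×ˢ Set.Ioi 0))
    (hπpde : ∀ i ∈ stateS, ∀ t p s : ℝ,
      t ∈ Set.Ioo (0:ℝ) T → p ∈ Set.Ioi (0:ℝ) → s ∈ Set.Ioi (0:ℝ) →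
        pT t p i s + pS t p i s +
          (∑ j ∈ conjS i, hijf hp hm i j s *
            (π t (p * (1 + δ * alphaR j)) j 0 - π t p i s)) = 0)
    (hπT : ∀ p s : ℝ, p ∈ Set.Ici (0:ℝ) → s ∈ Set.Ici (0:ℝ) → ∀ i ∈ stateS, π T p i s = p)
    (u Du : ℝ → ℝ → ℕ → ℝ → ℝ) (hu : memV T u)
    (huderiv : ∀ i ∈ stateS, ∀ t p s : ℝ,
      t ∈ Set.Ioo (0:ℝ) T → p ∈ Set.Ioi (0:ℝ) → s ∈ Set.Ioi (0:ℝ) →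
        HasDerivAt (fun e : ℝ => u (t + e) p i (s + e)) (Du t p i s) 0)
    (hucont : ∀ i ∈ stateS,
      ContinuousOn (fun x : ℝ × ℝ × ℝ => Du x.1 x.2.1 i x.2.2)
        (Set.Ioo 0 T ×ˢ Set.Ioi 0 ×ˢ Set.Ioi 0))
    (hupde : ∀ i ∈ stateS, ∀ t p s : ℝ,
      t ∈ Set.Ioo (0:ℝ) T → p ∈ Set.Ioi (0:ℝ) → s ∈ Set.Ioi (0:ℝ) →
        Du t p i s +
          (∑ j ∈ conjS i, hijf hp hm i j s *
            (u t (p * (1 + δ * alphaR j)) j 0 - u t p i s)) +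
          (∑ j ∈ conjS i, max (mjf δ ε K hp hm lp lm tp tm π i j t p s) 0) = 0)
    (huT : ∀ p s : ℝ, p ∈ Set.Ici (0:ℝ) → s ∈ Set.Ici (0:ℝ) → ∀ i ∈ stateS,
      u T p i s = 0) :
    (∀ i ∈ stateS, ∀ t p s x : ℝ, ∀ y : ℤ,
      t ∈ Set.Ioo (0:ℝ) T → p ∈ Set.Ioi (0:ℝ) → s ∈ Set.Ioi (0:ℝ) →
        ∃ L : ℝ,
          HasDerivAt (fun e : ℝ => J0 π u (t + e) p i (s + e) x y) L 0 ∧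
          (∀ l ∈ Lset, Aop δ ε K hp hm lp lm tp tm (J0 π u) L t p i s x y l ≤ 0) ∧
          (∃ lstar ∈ Lset,
            (∀ j ∈ conjS i, lcomp lstar j =
              if 0 < mjf δ ε K hp hm lp lm tp tm π i j t p s then 1 else 0) ∧
            Aop δ ε K hp hm lp lm tp tm (J0 π u) L t p i s x y lstar = 0)) ∧
    (∀ p s x : ℝ, ∀ y : ℤ, p ∈ Set.Ici (0:ℝ) → s ∈ Set.Ici (0:ℝ) → ∀ i ∈ stateS,
      J0 π u T p i s x y = x + (y : ℝ) * p) := by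
  constructor
  · intro i hi t p s x y ht hp0 hs0
    have hDπ : HasDerivAt (fun e => π (t + e) p i (s + e)) (pT t p i s + pS t p i s) 0 := by
      have hTc : ContinuousAt (fun q : ℝ × ℝ => pT q.1 p i q.2) (t, s) := by
        have hUo : IsOpen (Set.Ioo (0:ℝ) T ×ˢ Set.Ioi (0:ℝ) ×ˢ Set.Ioi (0:ℝ)) :=
          isOpen_Ioo.prod (isOpen_Ioi.prod isOpen_Ioi)
        have hca : ContinuousAt (fun q : ℝ × ℝ × ℝ => pT q.1 q.2.1 i q.2.2) (t, p, s) :=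
          (hπcont i hi).1.continuousAt (hUo.mem_nhds ⟨ht, hp0, hs0⟩)
        have hmap : ContinuousAt (fun q : ℝ × ℝ => ((q.1, p, q.2) : ℝ × ℝ × ℝ)) (t, s) :=
          (continuous_fst.prodMk (continuous_const.prodMk continuous_snd)).continuousAt
        have hmap' : Filter.Tendsto (fun q : ℝ × ℝ => ((q.1, p, q.2) : ℝ × ℝ × ℝ))
            (nhds (t, s)) (nhds (t, p, s)) := hmap
        exact Filter.Tendsto.comp hca hmap' 
      exact dirDeriv' T (fun a b => π a p i b) (fun a b => pT a p i b) (pS t p i s) t s ht hs0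
        (fun a b ha hb => (hπderiv i hi a p b ha hp0 hb).1)
        (hπderiv i hi t p s ht hp0 hs0).2 hTc
    have hud := huderiv i hi t p s ht hp0 hs0
    have key : ∀ l : ℤ × ℤ,
        Aop δ ε K hp hm lp lm tp tm (J0 π u)
          ((y : ℝ) * (pT t p i s + pS t p i s) + Du t p i s) t p i s x y l
        = ∑ j ∈ conjS i, (((lcomp l j : ℤ) : ℝ) * mjf δ ε K hp hm lp lm tp tm π i j t p s
            - max (mjf δ ε K hp hm lp lm tp tm π i j t p s) 0) := by
      intro l
      have hπe := hπpde i hi t p s ht hp0 hs0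
      have hue := hupde i hi t p s ht hp0 hs0
      have ha : ∀ j : ℕ, ((-1:ℝ)) ^ j * ((-1:ℝ)) ^ j = 1 := by
        intro j; rw [← mul_pow]; norm_num
      have hterm : ∀ j ∈ conjS i,
          (lamBar lp lm j s * ∑ k ∈ Finset.range (K + 1), thBar tp tm j k *
              (J0 π u t p i s
                  (x + alphaR j * (lcomp l j : ℝ) * (k : ℝ) *
                    (p * (1 + δ * alphaR j) - alphaR j * ε))
                  (y - alphaZ j * lcomp l j * (k : ℤ)) -
                J0 π u t p i s x y) +
            hijf hp hm i j s *
              (J0 π u t (p * (1 + δ * alphaR j)) j 0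
                  (x + alphaR j * (lcomp l j : ℝ) * (K : ℝ) *
                    (p * (1 + δ * alphaR j) - alphaR j * ε))
                  (y - alphaZ j * lcomp l j * (K : ℤ)) -
                J0 π u t p i s x y))
          = ((lcomp l j : ℤ) : ℝ) * mjf δ ε K hp hm lp lm tp tm π i j t p s
            + hijf hp hm i j s * ((y : ℝ) * (π t (p * (1 + δ * alphaR j)) j 0 - π t p i s)
                + (u t (p * (1 + δ * alphaR j)) j 0 - u t p i s)) := by
        intro j _
        have hin : ∀ k ∈ Finset.range (K + 1),
            thBar tp tm j k * (J0 π u t p i s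
                (x + alphaR j * (lcomp l j : ℝ) * (k : ℝ) *
                  (p * (1 + δ * alphaR j) - alphaR j * ε))
                (y - alphaZ j * lcomp l j * (k : ℤ)) - J0 π u t p i s x y)
            = ((k : ℝ) * thBar tp tm j k) * (((lcomp l j : ℤ) : ℝ) *
                (alphaR j * p - alphaR j * π t p i s + δ * p - ε)) := by
          intro k _
          simp only [J0, alphaZ, alphaR]
          push_cast
          linear_combination (thBar tp tm j k * ((lcomp l j : ℤ) : ℝ) * (k : ℝ) *
            (δ * p - ε)) * ha j
        rw [Finset.sum_congr rfl hin, ← Finset.sum_mul]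
        simp only [J0, mjf, alphaZ, alphaR]
        push_cast
        linear_combination (hijf hp hm i j s * ((lcomp l j : ℤ) : ℝ) * (K : ℝ) *
          (δ * p - ε)) * ha j
      have hsplit : ∑ j ∈ conjS i, (hijf hp hm i j s *
          ((y : ℝ) * (π t (p * (1 + δ * alphaR j)) j 0 - π t p i s)
            + (u t (p * (1 + δ * alphaR j)) j 0 - u t p i s)))
          = (y : ℝ) * ∑ j ∈ conjS i, hijf hp hm i j s *
              (π t (p * (1 + δ * alphaR j)) j 0 - π t p i s)
            + ∑ j ∈ conjS i, hijf hp hm i j s *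
              (u t (p * (1 + δ * alphaR j)) j 0 - u t p i s) := by
        rw [Finset.mul_sum, ← Finset.sum_add_distrib]
        exact Finset.sum_congr rfl fun j _ => by ring
      simp only [Aop]
      rw [Finset.sum_congr rfl hterm, Finset.sum_add_distrib, Finset.sum_sub_distrib, hsplit]
      linear_combination (y : ℝ) * hπe + hue
    refine ⟨(y : ℝ) * (pT t p i s + pS t p i s) + Du t p i s, ?_, ?_, ?_⟩
    · simpa [J0, Pi.add_def] using ((hDπ.const_mul ((y : ℝ))).const_add x).add hud
    · intro l hl
      simp only [Lset, Set.mem_prod, Set.mem_insert_iff, Set.mem_singleton_iff] at hl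
      rw [key l]
      refine Finset.sum_nonpos fun j _ => ?_
      have hc : lcomp l j = 0 ∨ lcomp l j = 1 := by
        unfold lcomp; split_ifs
        · exact hl.1
        · exact hl.2
      have hmr := le_max_right (mjf δ ε K hp hm lp lm tp tm π i j t p s) 0
      have hml := le_max_left (mjf δ ε K hp hm lp lm tp tm π i j t p s) 0
      rcases hc with h | h <;> rw [h] <;> push_cast <;> linarith
    · obtain ⟨ls, hls, hlsc⟩ := exists_lstar i hi
        (fun j => mjf δ ε K hp hm lp lm tp tm π i j t p s)
      refine ⟨ls, hls, hlsc, ?_⟩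
      rw [key ls]
      refine Finset.sum_eq_zero fun j hj => ?_
      rw [hlsc j hj]
      by_cases h : 0 < mjf δ ε K hp hm lp lm tp tm π i j t p s
      · rw [if_pos h, max_eq_left h.le]; push_cast; ring
      · rw [if_neg h, max_eq_right (not_lt.1 h)]; push_cast; ring
  · intro p s x y hp0 hs0 i hi
    simp [J0, hπT p s hp0 hs0 i hi, huT p s hp0 hs0 i hi]
end
end
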